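/- arXiv:1504.03732 — 6 statements merged into one kernel-verified Lean document; each statement's English description precedes it below -/
import Mathlib

section
/- Let T ∈ A⊗B⊗C with dim B = dim C = m be 1_A-generic and let α₀ ∈ A^* be such that T(α₀) is invertible. Then: (1) if the border rank of T equals m, the space E_{α₀}(T) = {T(α)T(α₀)^{-1} : α ∈ A^*} is commutative (all its elements pairwise commute); and (2) if E_{α₀}(T) is commutative, then E_{α₀'}(T) is commutative for every α₀' ∈ A^* such that T(α₀') is invertible. -/
open scoped BigOperators

noncomputable section

/-- A tensor in coordinates: an element of ℂ^a ⊗ ℂ^b ⊗ ℂ^c. -/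
abbrev Tensor (a b c : ℕ) : Type := Fin a → Fin b → Fin c → ℂ

/-- `T` has rank at most `r`: it is a sum of `r` simple tensors. -/
def tensorRankLE {a b c : ℕ} (T : Tensor a b c) (r : ℕ) : Prop :=
  ∃ (u : Fin r → Fin a → ℂ) (v : Fin r → Fin b → ℂ) (w : Fin r → Fin c → ℂ),
    ∀ i j k, T i j k = ∑ s, u s i * v s j * w s k

/-- The rank of a tensor. -/
def tensorRank {a b c : ℕ} (T : Tensor a b c) : ℕ :=
  sInf {r | tensorRankLE T r}

/-- The border rank of a tensor: the least `r` such that `T` is a limit of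
tensors of rank at most `r`. -/
def borderRank {a b c : ℕ} (T : Tensor a b c) : ℕ :=
  sInf {r | T ∈ closure {S : Tensor a b c | tensorRankLE S r}}

/-- The tslice (contraction) of `T` at `α ∈ A^*`, as an element of `B ⊗ C`,
identified with a matrix. -/
def tslice {a b c : ℕ} (T : Tensor a b c) (α : Fin a → ℂ) :
    Matrix (Fin b) (Fin c) ℂ :=
  Matrix.of fun j k => ∑ i, α i * T i j k

def tsliceB {a b c : ℕ} (T : Tensor a b c) (β : Fin b → ℂ) :
    Matrix (Fin a) (Fin c) ℂ :=
  Matrix.of fun i k => ∑ j, β j * T i j k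

def tsliceC {a b c : ℕ} (T : Tensor a b c) (γ : Fin c → ℂ) :
    Matrix (Fin a) (Fin b) ℂ :=
  Matrix.of fun i j => ∑ k, γ k * T i j k

/-- `T` is `1_A`-generic: `T(A^*)` contains an invertible matrix. -/
def OneAGeneric {a m : ℕ} (T : Tensor a m m) : Prop :=
  ∃ α : Fin a → ℂ, IsUnit (tslice T α)

/-- The space `E_{α₀}(T) = { T(α) T(α₀)⁻¹ : α ∈ A^* } ⊆ End(B)`. -/
def Espace {a m : ℕ} (T : Tensor a m m) (α₀ : Fin a → ℂ) :
    Set (Matrix (Fin m) (Fin m) ℂ) :=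
  {X | ∃ α : Fin a → ℂ, X = tslice T α * (tslice T α₀)⁻¹}


/-! ### Auxiliary lemmas -/

/-- The slice of a rank-`≤ m` tensor is `V * D * W` with `D` diagonal. -/
lemma tslice_of_rank {a m : ℕ} (S : Tensor a m m)
    (u : Fin m → Fin a → ℂ) (v : Fin m → Fin m → ℂ) (w : Fin m → Fin m → ℂ)
    (hS : ∀ i j k, S i j k = ∑ s, u s i * v s j * w s k) (α : Fin a → ℂ) :
    tslice S α = (Matrix.of fun j s => v s j) *
      Matrix.diagonal (fun s => ∑ i, α i * u s i) * (Matrix.of fun s k => w s k) := by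
  ext j k
  simp only [tslice, Matrix.of_apply, hS, Matrix.mul_apply, Matrix.diagonal_apply,
    mul_ite, ite_mul, mul_zero, zero_mul, Finset.sum_ite_eq, Finset.sum_ite_eq', Finset.mem_univ, if_true,
    Finset.mul_sum, Finset.sum_mul]
  rw [Finset.sum_comm]
  refine Finset.sum_congr rfl fun s _ => Finset.sum_congr rfl fun i _ => by ring

/-- Helper: `W * (adj W * X) = det W • X`. -/
lemma mul_adj_mul {m : ℕ} (W X : Matrix (Fin m) (Fin m) ℂ) :
    W * (W.adjugate * X) = W.det • X := by
  rw [← Matrix.mul_assoc, Matrix.mul_adjugate, Matrix.smul_mul, Matrix.one_mul]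

/-- Helper: `adj V * (V * X) = det V • X`. -/
lemma adj_mul_mul {m : ℕ} (V X : Matrix (Fin m) (Fin m) ℂ) :
    V.adjugate * (V * X) = V.det • X := by
  rw [← Matrix.mul_assoc, Matrix.adjugate_mul, Matrix.smul_mul, Matrix.one_mul]

/-- The key "sandwich" identity for matrices of the form `V * D * W`. -/
lemma sandwich {m : ℕ} (V W : Matrix (Fin m) (Fin m) ℂ) (d₀ dα dβ : Fin m → ℂ) :
    (V * Matrix.diagonal dα * W) * (V * Matrix.diagonal d₀ * W).adjugate *
      (V * Matrix.diagonal dβ * W)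
    = (V * Matrix.diagonal dβ * W) * (V * Matrix.diagonal d₀ * W).adjugate *
      (V * Matrix.diagonal dα * W) := by
  have key : ∀ x y : Fin m → ℂ,
      (V * Matrix.diagonal x * W) * (V * Matrix.diagonal d₀ * W).adjugate *
        (V * Matrix.diagonal y * W)
      = (W.det * V.det) •
          (V * (Matrix.diagonal x * (Matrix.diagonal d₀).adjugate * Matrix.diagonal y) * W) := by
    intro x y
    rw [Matrix.adjugate_mul_distrib, Matrix.adjugate_mul_distrib]
    simp only [Matrix.mul_assoc]
    rw [mul_adj_mul, adj_mul_mul]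
    simp only [Matrix.mul_smul, smul_smul]
  rw [key, key]
  have hmid : Matrix.diagonal dα * (Matrix.diagonal d₀).adjugate * Matrix.diagonal dβ
      = Matrix.diagonal dβ * (Matrix.diagonal d₀).adjugate * Matrix.diagonal dα := by
    rw [Matrix.adjugate_diagonal]
    simp only [Matrix.diagonal_mul_diagonal]
    exact congrArg Matrix.diagonal (funext fun i => by ring)
  rw [hmid]

/-- The adjugate-commutation identity holds for tensors of rank at most `m`. -/
lemma adj_comm_of_rank {a m : ℕ} (S : Tensor a m m) (hS : tensorRankLE S m)
    (α₀ α β : Fin a → ℂ) :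
    tslice S α * (tslice S α₀).adjugate * tslice S β
      = tslice S β * (tslice S α₀).adjugate * tslice S α := by
  obtain ⟨u, v, w, h⟩ := hS
  rw [tslice_of_rank S u v w h α, tslice_of_rank S u v w h β, tslice_of_rank S u v w h α₀]
  exact sandwich _ _ _ _ _

/-- Continuity of the slice map. -/
lemma continuous_tslice {a m : ℕ} (α : Fin a → ℂ) :
    Continuous fun S : Tensor a m m => tslice S α := by
  refine continuous_matrix fun j k => ?_
  simp only [tslice, Matrix.of_apply]
  exact continuous_finset_sum _ fun i _ => continuous_const.mul
    ((continuous_apply k).comp ((continuous_apply j).comp (continuous_apply i)))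

/-- The adjugate-commutation identity passes to limits: it holds for any tensor
in the closure of the rank-`≤ m` tensors. -/
lemma adj_comm_of_closure {a m : ℕ} (T : Tensor a m m)
    (hT : T ∈ closure {S : Tensor a m m | tensorRankLE S m}) (α₀ α β : Fin a → ℂ) :
    tslice T α * (tslice T α₀).adjugate * tslice T β
      = tslice T β * (tslice T α₀).adjugate * tslice T α := by
  have hcl : IsClosed {S : Tensor a m m |
      tslice S α * (tslice S α₀).adjugate * tslice S β
        = tslice S β * (tslice S α₀).adjugate * tslice S α} := by
    apply isClosed_eq
    · exact ((continuous_tslice α).matrix_mul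
        (continuous_tslice α₀).matrix_adjugate).matrix_mul (continuous_tslice β)
    · exact ((continuous_tslice β).matrix_mul
        (continuous_tslice α₀).matrix_adjugate).matrix_mul (continuous_tslice α)
  exact closure_minimal (fun S hS => adj_comm_of_rank S hS α₀ α β) hcl hT

/-- Purely ring-theoretic form of part (2). -/
lemma ring_transfer {R : Type*} [Ring R] (𝒮 : Set R) (N M t₀ t₀' : R)
    (ht₀' : t₀' ∈ 𝒮) (hNt₀ : N * t₀ = 1) (hM : t₀' * M = 1) (hM' : M * t₀' = 1)
    (hstar : ∀ x ∈ 𝒮, ∀ y ∈ 𝒮, x * N * y = y * N * x)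
    {x y : R} (hx : x ∈ 𝒮) (hy : y ∈ 𝒮) : x * M * y = y * M * x := by
  have hA : ∀ z ∈ 𝒮, M * (z * N) = N * z * M := by
    intro z hz
    have h := hstar z hz t₀' ht₀'
    calc M * (z * N) = M * (z * N * (t₀' * M)) := by rw [hM, mul_one]
      _ = M * (z * N * t₀') * M := by simp only [mul_assoc]
      _ = M * (t₀' * N * z) * M := by rw [h]
      _ = (M * t₀') * (N * z * M) := by simp only [mul_assoc]
      _ = N * z * M := by rw [hM', one_mul]
  calc x * M * y = x * M * (y * (N * t₀)) := by rw [hNt₀, mul_one]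
    _ = x * (M * (y * N)) * t₀ := by simp only [mul_assoc]
    _ = x * (N * y * M) * t₀ := by rw [hA y hy]
    _ = (x * N * y) * (M * t₀) := by simp only [mul_assoc]
    _ = (y * N * x) * (M * t₀) := by rw [hstar x hx y hy]
    _ = y * (N * x * M) * t₀ := by simp only [mul_assoc]
    _ = y * (M * (x * N)) * t₀ := by rw [hA x hx]
    _ = y * M * (x * (N * t₀)) := by simp only [mul_assoc]
    _ = y * M * x := by rw [hNt₀, mul_one]

/-- Commutativity of `E_{α₀}` is equivalent to the symmetric slice identity. -/
lemma comm_iff_ident {a m : ℕ} (T : Tensor a m m) (α₀ : Fin a → ℂ)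
    (h₀ : IsUnit (tslice T α₀)) :
    (∀ X ∈ Espace T α₀, ∀ Y ∈ Espace T α₀, X * Y = Y * X) ↔
    (∀ α β : Fin a → ℂ,
      tslice T α * (tslice T α₀)⁻¹ * tslice T β
        = tslice T β * (tslice T α₀)⁻¹ * tslice T α) := by
  have hdet : IsUnit (tslice T α₀).det := (Matrix.isUnit_iff_isUnit_det _).mp h₀
  have hinv : (tslice T α₀)⁻¹ * tslice T α₀ = 1 := Matrix.nonsing_inv_mul _ hdet
  constructor
  · intro hc α β
    have h := hc _ ⟨α, rfl⟩ _ ⟨β, rfl⟩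
    have h2 := congrArg (· * tslice T α₀) h
    simpa only [mul_assoc, hinv, mul_one] using h2
  · rintro h X ⟨α, rfl⟩ Y ⟨β, rfl⟩
    have h' := congrArg (· * (tslice T α₀)⁻¹) (h α β)
    simpa only [mul_assoc] using h'

/-- (Lemma 2.8 / `lem:com` in Landsberg–Michałek, "Abelian Tensors".)
(1) If `R̲(T) = m` then `E_{α₀}(T)` is commutative;
(2) if `E_{α₀}(T)` is commutative then so is `E_{α₀'}(T)` for every `α₀'`
with `T(α₀')` invertible. -/
theorem stmt0 {a m : ℕ} (T : Tensor a m m) (hgen : OneAGeneric T)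
    (α₀ : Fin a → ℂ) (h₀ : IsUnit (tslice T α₀)) :
    (borderRank T = m →
      ∀ X ∈ Espace T α₀, ∀ Y ∈ Espace T α₀, X * Y = Y * X) ∧
    ((∀ X ∈ Espace T α₀, ∀ Y ∈ Espace T α₀, X * Y = Y * X) →
      ∀ α₀' : Fin a → ℂ, IsUnit (tslice T α₀') →
        ∀ X ∈ Espace T α₀', ∀ Y ∈ Espace T α₀', X * Y = Y * X) := by
  have hdet : IsUnit (tslice T α₀).det := (Matrix.isUnit_iff_isUnit_det _).mp h₀
  constructor
  · -- part (1)
    intro hbr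
    rcases Nat.eq_zero_or_pos m with hm | hm
    · subst hm
      intro X _ Y _
      exact Subsingleton.elim _ _
    -- the set of achievable border ranks is nonempty
    have hne : {r | T ∈ closure {S : Tensor a m m | tensorRankLE S r}}.Nonempty := by
      by_contra hemp
      rw [Set.not_nonempty_iff_eq_empty] at hemp
      rw [borderRank, hemp, Nat.sInf_empty] at hbr
      omega
    have hmem : T ∈ closure {S : Tensor a m m | tensorRankLE S m} := by
      have := Nat.sInf_mem hne
      rwa [← borderRank, hbr] at this
    rw [comm_iff_ident T α₀ h₀]
    intro α β
    have hid := adj_comm_of_closure T hmem α₀ α β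
    -- rewrite adjugate as det • inverse
    have hadj : (tslice T α₀).adjugate = (tslice T α₀).det • (tslice T α₀)⁻¹ := by
      rw [Matrix.inv_def, smul_smul, Ring.inverse_eq_inv',
        mul_inv_cancel₀ (by simpa using hdet.ne_zero), one_smul]
    rw [hadj] at hid
    simp only [Matrix.mul_smul, Matrix.smul_mul] at hid
    exact smul_right_injective _ (by simpa using hdet.ne_zero) hid
  · -- part (2)
    intro hc α₀' h₀'
    have hdet' : IsUnit (tslice T α₀').det := (Matrix.isUnit_iff_isUnit_det _).mp h₀'
    rw [comm_iff_ident T α₀ h₀] at hc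
    rw [comm_iff_ident T α₀' h₀']
    intro α β
    refine ring_transfer (Set.range fun γ => tslice T γ) (tslice T α₀)⁻¹
      (tslice T α₀')⁻¹ (tslice T α₀) (tslice T α₀') ⟨α₀', rfl⟩
      (Matrix.nonsing_inv_mul _ hdet) (Matrix.mul_nonsing_inv _ hdet')
      (Matrix.nonsing_inv_mul _ hdet') ?_ ⟨α, rfl⟩ ⟨β, rfl⟩
    rintro x ⟨γ, rfl⟩ y ⟨δ, rfl⟩
    exact hc γ δ

end
end

section
/- Let T ∈ A⊗B⊗C with dim B = dim C = m be A-concise and 1_A-generic, let α₀ ∈ A^* be such that T(α₀) is invertible, and suppose E_{α₀}(T) is commutative and closed under composition. Then for every α₀' ∈ A^* with T(α₀') invertible one has the equality of subspaces E_{α₀}(T) = E_{α₀'}(T); in particular E_{α₀'}(T) is also closed under composition. -/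
open scoped BigOperators

noncomputable section

/-- (Proposition `cor:equal`.) If `T` is `A`-concise, `1_A`-generic and
`E_{α₀}(T)` is commutative and closed under composition, then
`E_{α₀}(T) = E_{α₀'}(T)` for every `α₀'` with `T(α₀')` invertible; in
particular `E_{α₀'}(T)` is also closed under composition. -/
theorem stmt2 {a m : ℕ} (T : Tensor a m m)
    (hconc : Function.Injective (tslice T))
    (hgen : OneAGeneric T)
    (α₀ : Fin a → ℂ) (h₀ : IsUnit (tslice T α₀))
    (hcomm : ∀ X ∈ Espace T α₀, ∀ Y ∈ Espace T α₀, X * Y = Y * X)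
    (hclosed : ∀ X ∈ Espace T α₀, ∀ Y ∈ Espace T α₀, X * Y ∈ Espace T α₀) :
    ∀ α₀' : Fin a → ℂ, IsUnit (tslice T α₀') →
      Espace T α₀ = Espace T α₀' ∧
      (∀ X ∈ Espace T α₀', ∀ Y ∈ Espace T α₀', X * Y ∈ Espace T α₀') := by

  classical
  intro α₀' h₀'
  have h₀d : IsUnit (tslice T α₀).det := (Matrix.isUnit_iff_isUnit_det _).mp h₀
  have h₀'d : IsUnit (tslice T α₀').det := (Matrix.isUnit_iff_isUnit_det _).mp h₀'
  set A₀ := tslice T α₀ with hA₀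
  set Z := tslice T α₀' * A₀⁻¹ with hZdef
  have hZmem : Z ∈ Espace T α₀ := ⟨α₀', rfl⟩
  have hZu : IsUnit Z := h₀'.mul (Matrix.isUnit_nonsing_inv_iff.mpr h₀)
  have hZd : IsUnit Z.det := (Matrix.isUnit_iff_isUnit_det _).mp hZu
  have hZA : Z * A₀ = tslice T α₀' := by
    rw [hZdef, Matrix.mul_assoc, Matrix.nonsing_inv_mul _ h₀d, Matrix.mul_one]
  have hinv' : (tslice T α₀')⁻¹ = A₀⁻¹ * Z⁻¹ := by
    rw [← hZA, Matrix.mul_inv_rev]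
  -- the space E as a submodule
  have tslice_add : ∀ α β, tslice T (α + β) = tslice T α + tslice T β := by
    intro α β
    ext j k
    simp [tslice, add_mul, Finset.sum_add_distrib]
  have tslice_smul : ∀ (c : ℂ) α, tslice T (c • α) = c • tslice T α := by
    intro c α
    ext j k
    simp [tslice, Finset.mul_sum, mul_assoc]
  let L : (Fin a → ℂ) →ₗ[ℂ] Matrix (Fin m) (Fin m) ℂ :=
    { toFun := fun α => tslice T α * A₀⁻¹
      map_add' := fun α β => by rw [tslice_add, Matrix.add_mul]
      map_smul' := fun c α => by rw [tslice_smul]; simp [Matrix.smul_mul] }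
  have hE : ∀ X, X ∈ LinearMap.range L ↔ X ∈ Espace T α₀ := by
    intro X
    constructor
    · rintro ⟨α, rfl⟩; exact ⟨α, rfl⟩
    · rintro ⟨α, rfl⟩; exact ⟨α, rfl⟩
  set E := LinearMap.range L with hEdef
  -- Z⁻¹ ∈ E via injective-implies-surjective on E
  have hmapmem : ∀ x ∈ E, (LinearMap.mulRight ℂ Z) x ∈ E := by
    intro x hx
    exact (hE _).mpr (hclosed _ ((hE _).mp hx) _ hZmem)
  let f : E →ₗ[ℂ] E := (LinearMap.mulRight ℂ Z).restrict hmapmem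
  have hfinj : Function.Injective f := by
    intro x y hxy
    have h1 : (x : Matrix (Fin m) (Fin m) ℂ) * Z = (y : Matrix (Fin m) (Fin m) ℂ) * Z :=
      congrArg Subtype.val hxy
    have h2 : (x : Matrix (Fin m) (Fin m) ℂ) = y := by
      have := congrArg (fun W => W * Z⁻¹) h1
      simpa [Matrix.mul_assoc, Matrix.mul_nonsing_inv _ hZd] using this
    exact Subtype.ext h2
  have hfsurj : Function.Surjective f := LinearMap.injective_iff_surjective.mp hfinj
  have h1mem : (1 : Matrix (Fin m) (Fin m) ℂ) ∈ E :=
    (hE _).mpr ⟨α₀, by rw [Matrix.mul_nonsing_inv _ h₀d]⟩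
  obtain ⟨w, hw⟩ := hfsurj ⟨1, h1mem⟩
  have hw1 : (w : Matrix (Fin m) (Fin m) ℂ) * Z = 1 := congrArg Subtype.val hw
  have hZinv : Z⁻¹ = (w : Matrix (Fin m) (Fin m) ℂ) := Matrix.inv_eq_left_inv hw1
  have hZinvmem : Z⁻¹ ∈ Espace T α₀ := by rw [hZinv]; exact (hE _).mp w.2
  -- set equality
  have heq : Espace T α₀ = Espace T α₀' := by
    ext X
    constructor
    · rintro ⟨α, rfl⟩
      obtain ⟨β, hβ⟩ := hclosed _ (⟨α, rfl⟩ : _ ∈ Espace T α₀) _ hZmem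
      refine ⟨β, ?_⟩
      have := congrArg (fun W => W * Z⁻¹) hβ
      rw [hinv', ← Matrix.mul_assoc, ← this, Matrix.mul_assoc,
        Matrix.mul_nonsing_inv _ hZd, Matrix.mul_one]
    · rintro ⟨α, rfl⟩
      rw [hinv', ← Matrix.mul_assoc]
      exact hclosed _ ⟨α, rfl⟩ _ hZinvmem
  refine ⟨heq, ?_⟩
  intro X hX Y hY
  rw [← heq] at hX hY ⊢
  exact hclosed X hX Y hY


end
end

section
/- Let T ∈ A⊗B⊗C with dim A = m be A-concise. If the border rank of T equals m, then there exists a complete flag A₁ ⊂ A₂ ⊂ ⋯ ⊂ A_m = A^* with dim A_j = j such that for every j, every element of the subspace T(A_j) ⊆ B⊗C has rank at most j as a linear map C^* → B (i.e. T(A_j) is contained in the cone over the j-th secant variety of the Segre variety of rank-one elements of B⊗C). -/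
open scoped BigOperators

noncomputable section

open Module Submodule Filter Topology Finset

namespace Stmt4Aux

def dotc {N : ℕ} (x y : Fin N → ℂ) : ℂ := ∑ i, (starRingEnd ℂ) (x i) * y i

def dotL {N : ℕ} (x : Fin N → ℂ) : (Fin N → ℂ) →ₗ[ℂ] ℂ where
  toFun y := dotc x y
  map_add' a b := by
    simp [dotc, mul_add, Finset.sum_add_distrib]
  map_smul' c a := by
    simp only [dotc, Pi.smul_apply, smul_eq_mul, RingHom.id_apply, Finset.mul_sum]
    exact Finset.sum_congr rfl (fun i _ => by ring)

lemma dotL_apply {N : ℕ} (x y : Fin N → ℂ) : dotL x y = dotc x y := rfl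

lemma dotc_self {N : ℕ} (x : Fin N → ℂ) :
    dotc x x = ((∑ i, Complex.normSq (x i) : ℝ) : ℂ) := by
  simp [dotc, Complex.normSq_eq_conj_mul_self]

lemma dotc_conj {N : ℕ} (x y : Fin N → ℂ) :
    dotc y x = (starRingEnd ℂ) (dotc x y) := by
  simp [dotc]
  exact Finset.sum_congr rfl (fun i _ => by ring)

lemma dotc_smul_left {N : ℕ} (c : ℂ) (x y : Fin N → ℂ) :
    dotc (c • x) y = (starRingEnd ℂ) c * dotc x y := by
  simp [dotc, Finset.mul_sum]
  exact Finset.sum_congr rfl (fun i _ => by ring)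

lemma dotc_smul_right {N : ℕ} (c : ℂ) (x y : Fin N → ℂ) :
    dotc x (c • y) = c * dotc x y := by
  simp [dotc, Finset.mul_sum]
  exact Finset.sum_congr rfl (fun i _ => by ring)

/-- L1: a unit vector in `q` orthogonal to the `f i`. -/
lemma exists_orth {N d : ℕ} (f : Fin d → Fin N → ℂ) (q : Submodule ℂ (Fin N → ℂ))
    (hq : d < finrank ℂ q) :
    ∃ x, x ∈ q ∧ (∀ i, dotc (f i) x = 0) ∧ dotc x x = 1 := by
  classical
  set Φ : (Fin N → ℂ) →ₗ[ℂ] (Fin d → ℂ) := LinearMap.pi (fun i => dotL (f i)) with hΦ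
  have hN : finrank ℂ (Fin N → ℂ) = N := Module.finrank_fin_fun ℂ
  have h1 : finrank ℂ (LinearMap.range Φ) + finrank ℂ (LinearMap.ker Φ) = N := by
    have := LinearMap.finrank_range_add_finrank_ker Φ
    rwa [hN] at this
  have h2 : finrank ℂ (LinearMap.range Φ) ≤ d := by
    have := Submodule.finrank_le (LinearMap.range Φ)
    simpa [Module.finrank_fin_fun] using this
  have h3 : finrank ℂ (q ⊔ LinearMap.ker Φ : Submodule ℂ (Fin N → ℂ))
      + finrank ℂ (q ⊓ LinearMap.ker Φ : Submodule ℂ (Fin N → ℂ))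
      = finrank ℂ q + finrank ℂ (LinearMap.ker Φ) :=
    Submodule.finrank_sup_add_finrank_inf_eq q (LinearMap.ker Φ)
  have h4 : finrank ℂ (q ⊔ LinearMap.ker Φ : Submodule ℂ (Fin N → ℂ)) ≤ N := by
    have := Submodule.finrank_le (q ⊔ LinearMap.ker Φ : Submodule ℂ (Fin N → ℂ))
    simpa [hN] using this
  have hpos : (q ⊓ LinearMap.ker Φ : Submodule ℂ (Fin N → ℂ)) ≠ ⊥ := by
    intro hbot
    rw [hbot] at h3
    simp [finrank_bot] at h3
    omega
  obtain ⟨x, hx, hx0⟩ := Submodule.exists_mem_ne_zero_of_ne_bot hpos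
  have hxq : x ∈ q := hx.1
  have hxker : ∀ i, dotc (f i) x = 0 := by
    intro i
    have : Φ x = 0 := hx.2
    have := congrFun this i
    simpa [hΦ, LinearMap.pi_apply, dotL_apply] using this
  set r : ℝ := ∑ i, Complex.normSq (x i) with hr
  have hrpos : 0 < r := by
    rcases Function.ne_iff.1 hx0 with ⟨i, hi⟩
    have : 0 < Complex.normSq (x i) := by
      simpa [Complex.normSq_pos] using hi
    exact lt_of_lt_of_le this (Finset.single_le_sum (f := fun i => Complex.normSq (x i))
      (fun j _ => Complex.normSq_nonneg _) (Finset.mem_univ i))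
  set cc : ℝ := (Real.sqrt r)⁻¹ with hcc
  refine ⟨(cc : ℂ) • x, Submodule.smul_mem _ _ hxq, ?_, ?_⟩
  · intro i
    rw [dotc_smul_right, hxker i, mul_zero]
  · rw [dotc_smul_left, dotc_smul_right, dotc_self x, ← hr]
    have hc : (starRingEnd ℂ) (cc:ℂ) = (cc:ℂ) := Complex.conj_ofReal cc
    rw [hc]
    have hsq : (cc:ℝ) * (cc * r) = 1 := by
      rw [hcc]
      rw [← Real.sqrt_mul_self (le_of_lt hrpos)]
      field_simp
      rw [Real.sq_sqrt (Real.sqrt_nonneg _)]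
    have h5 : (((cc * (cc * r)) : ℝ) : ℂ) = (1:ℂ) := by rw [hsq]; norm_num
    push_cast at h5
    rw [hcc] at h5
    linear_combination h5

/-- L2: orthonormal family adapted to prescribed subspaces. -/
lemma exists_on_family {N : ℕ} : ∀ (d : ℕ) (K : Fin d → Submodule ℂ (Fin N → ℂ)),
    (∀ t : Fin d, (t : ℕ) < finrank ℂ (K t)) →
    ∃ e : Fin d → (Fin N → ℂ), (∀ t, e t ∈ K t) ∧
      (∀ s t, dotc (e s) (e t) = if s = t then 1 else 0) := by
  intro d
  induction d with
  | zero => exact fun K _ => ⟨fun t => 0, fun t => t.elim0, fun s t => s.elim0⟩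
  | succ d ih =>
    intro K hK
    obtain ⟨e, hmem, hon⟩ := ih (fun t => K t.castSucc) (fun t => hK t.castSucc)
    obtain ⟨x, hxq, hxorth, hxx⟩ := exists_orth e (K (Fin.last d)) (by simpa using hK (Fin.last d))
    refine ⟨Fin.snoc e x, ?_, ?_⟩
    · intro t
      refine Fin.lastCases ?_ ?_ t
      · simpa using hxq
      · intro i; simpa using hmem i
    · intro s t
      refine Fin.lastCases ?_ ?_ s
      · refine Fin.lastCases ?_ ?_ t
        · simpa using hxx
        · intro j
          have : dotc x (e j) = 0 := by
            rw [dotc_conj, hxorth j, map_zero]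
          simp [Fin.snoc_castSucc, this, (Fin.castSucc_lt_last j).ne']
      · intro i
        refine Fin.lastCases ?_ ?_ t
        · simpa [(Fin.castSucc_lt_last i).ne] using hxorth i
        · intro j
          simpa using hon i j

/-- orthonormal (w.r.t. `dotc`) families are linearly independent. -/
lemma linearIndependent_of_on {N d : ℕ} (e : Fin d → Fin N → ℂ)
    (hon : ∀ s t, dotc (e s) (e t) = if s = t then 1 else 0) :
    LinearIndependent ℂ e := by
  classical
  rw [Fintype.linearIndependent_iff]
  intro g hg s
  have := congrArg (dotL (e s)) hg
  rw [map_sum, map_zero] at this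
  have h2 : ∀ t, dotL (e s) (g t • e t) = g t * dotc (e s) (e t) := by
    intro t
    rw [map_smul]
    simp [dotL_apply]
  rw [Finset.sum_congr rfl (fun t _ => h2 t)] at this
  simpa [hon, mul_ite] using this

/-- coordinates of a `dotc`-unit vector are bounded by 1. -/
lemma coord_le_one {N : ℕ} {x : Fin N → ℂ} (hx : dotc x x = 1) (i : Fin N) : ‖x i‖ ≤ 1 := by
  have h := hx
  rw [dotc_self] at h
  have hr : (∑ j, Complex.normSq (x j)) = 1 := by exact_mod_cast h
  have h1 : Complex.normSq (x i) ≤ 1 := by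
    rw [← hr]
    exact Finset.single_le_sum (f := fun j => Complex.normSq (x j))
      (fun j _ => Complex.normSq_nonneg _) (Finset.mem_univ i)
  have h2 : ‖x i‖ ^ 2 ≤ 1 := by
    rw [Complex.sq_norm]
    exact h1
  nlinarith [norm_nonneg (x i)]

/-- sum helper: sum over `Fin mm` of a function vanishing above `jj` equals
sum over `Fin jj`. -/
lemma sum_trunc {β : Type*} [AddCommMonoid β] {mm jj : ℕ} (h : jj ≤ mm) (f : Fin mm → β)
    (hf : ∀ s : Fin mm, jj ≤ (s : ℕ) → f s = 0) :
    ∑ s, f s = ∑ t : Fin jj, f (Fin.castLE h t) := by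
  classical
  rw [← Finset.sum_filter_of_ne (p := fun s : Fin mm => (s : ℕ) < jj)
    (by intro x _ hx; by_contra hc; exact hx (hf x (by omega)))]
  refine Finset.sum_bij' (fun (s : Fin mm) hs => (⟨(s : ℕ), by
      simpa using (Finset.mem_filter.1 hs).2⟩ : Fin jj))
    (fun (t : Fin jj) _ => Fin.castLE h t) ?_ ?_ ?_ ?_ ?_
  · intro a ha; simp
  · intro t ht
    simp [Fin.lt_def]
  · intro a ha; ext; simp
  · intro t ht; ext; simp
  · intro a ha; rfl

/-- L3: orthonormal spanning family of a subspace. -/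
lemma exists_on_span {N : ℕ} (C : Submodule ℂ (Fin N → ℂ)) :
    ∃ g : Fin (finrank ℂ C) → (Fin N → ℂ),
      (∀ s t, dotc (g s) (g t) = if s = t then 1 else 0) ∧
      Submodule.span ℂ (Set.range g) = C := by
  obtain ⟨g, hmem, hon⟩ := exists_on_family (finrank ℂ C) (fun _ => C) (fun t => t.isLt)
  refine ⟨g, hon, ?_⟩
  have hle : Submodule.span ℂ (Set.range g) ≤ C := by
    rw [Submodule.span_le]
    rintro _ ⟨t, rfl⟩
    exact hmem t
  have hfr := finrank_span_eq_card (linearIndependent_of_on g hon)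
  rw [Fintype.card_fin] at hfr
  exact Submodule.eq_of_le_of_finrank_le hle (le_of_eq hfr.symm)

lemma tendsto_dotc {N : ℕ} {f g : ℕ → Fin N → ℂ} {F G : Fin N → ℂ}
    (hf : Filter.Tendsto f atTop (𝓝 F)) (hg : Filter.Tendsto g atTop (𝓝 G)) :
    Filter.Tendsto (fun n => dotc (f n) (g n)) atTop (𝓝 (dotc F G)) := by
  unfold dotc
  refine tendsto_finset_sum _ (fun i _ => Filter.Tendsto.mul ?_ ?_)
  · exact (Complex.continuous_conj.tendsto _).comp ((tendsto_pi_nhds.1 hf) i)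
  · exact (tendsto_pi_nhds.1 hg) i

/-- LemC: a limit of matrices whose columns lie in spaces of dimension `≤ j`
has rank `≤ j`. -/
lemma rank_le_of_tendsto {b c j : ℕ} (M : ℕ → Matrix (Fin b) (Fin c) ℂ)
    (Mlim : Matrix (Fin b) (Fin c) ℂ) (hM : Filter.Tendsto M atTop (𝓝 Mlim))
    (C : ℕ → Submodule ℂ (Fin b → ℂ)) (hC : ∀ n, finrank ℂ (C n) ≤ j)
    (hcol : ∀ n y, (fun x => M n x y) ∈ C n) :
    Mlim.rank ≤ j := by
  classical
  -- orthonormal spanning families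
  have hg := fun n => exists_on_span (C n)
  choose g hgon hgspan using hg
  -- padded families
  set G : ℕ → Fin j → Fin b → ℂ := fun n t =>
    if h : (t : ℕ) < finrank ℂ (C n) then g n ⟨(t : ℕ), h⟩ else 0 with hG
  -- projection identity
  have hproj : ∀ n, ∀ v ∈ C n, ∑ t : Fin j, (dotc (G n t) v) • G n t = v := by
    intro n v hv
    rw [← hgspan n] at hv
    obtain ⟨a, ha⟩ := (mem_span_range_iff_exists_fun ℂ).1 hv
    have hvanish : ∀ t : Fin j, finrank ℂ (C n) ≤ (t : ℕ) →
        (dotc (G n t) v) • G n t = 0 := by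
      intro t ht
      have : G n t = 0 := by simp [hG, Nat.not_lt.2 ht]
      simp [this]
    rw [sum_trunc (hC n) _ hvanish]
    have hcast : ∀ t : Fin (finrank ℂ (C n)), G n (Fin.castLE (hC n) t) = g n t := by
      intro t
      simp only [hG, Fin.coe_castLE, t.isLt, dif_pos]
    have hdot : ∀ t : Fin (finrank ℂ (C n)), dotc (g n t) v = a t := by
      intro t
      rw [← ha, ← dotL_apply, map_sum]
      have : ∀ s, dotL (g n t) (a s • g n s) = a s * dotc (g n t) (g n s) := by
        intro s
        rw [map_smul]
        simp [dotL_apply]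
      rw [Finset.sum_congr rfl (fun s _ => this s)]
      simp [hgon n, mul_ite]
    calc ∑ t : Fin (finrank ℂ (C n)), (dotc (G n (Fin.castLE (hC n) t)) v) • G n (Fin.castLE (hC n) t)
        = ∑ t : Fin (finrank ℂ (C n)), a t • g n t := by
          refine Finset.sum_congr rfl (fun t _ => ?_)
          rw [hcast t, hdot t]
      _ = v := ha
  -- compactness
  have hball : ∀ n, G n ∈ Metric.closedBall (0 : Fin j → Fin b → ℂ) 1 := by
    intro n
    rw [mem_closedBall_zero_iff]
    refine (pi_norm_le_iff_of_nonneg zero_le_one).2 (fun t => ?_)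
    refine (pi_norm_le_iff_of_nonneg zero_le_one).2 (fun i => ?_)
    by_cases h : (t : ℕ) < finrank ℂ (C n)
    · have h1 : dotc (g n ⟨(t : ℕ), h⟩) (g n ⟨(t : ℕ), h⟩) = 1 := by simp [hgon n]
      have := coord_le_one h1 i
      simpa [hG, h] using this
    · simp [hG, h]
  obtain ⟨glim, -, φ, hφ, hgl⟩ :=
    (isCompact_closedBall (0 : Fin j → Fin b → ℂ) 1).tendsto_subseq hball
  -- the limit factorization
  have hMφ : Filter.Tendsto (fun n => M (φ n)) atTop (𝓝 Mlim) :=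
    hM.comp hφ.tendsto_atTop
  have hentry : ∀ x y, Filter.Tendsto (fun n => M (φ n) x y) atTop (𝓝 (Mlim x y)) := by
    intro x y
    exact (tendsto_pi_nhds.1 ((tendsto_pi_nhds.1 hMφ) x)) y
  have hGt : ∀ t, Filter.Tendsto (fun n => G (φ n) t) atTop (𝓝 (glim t)) := by
    intro t
    exact tendsto_pi_nhds.1 hgl t
  have key : ∀ x y, Mlim x y = ∑ t : Fin j, dotc (glim t) (fun z => Mlim z y) * glim t x := by
    intro x y
    refine tendsto_nhds_unique (hentry x y) ?_
    have heq : ∀ n, M (φ n) x y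
        = ∑ t : Fin j, dotc (G (φ n) t) (fun z => M (φ n) z y) * G (φ n) t x := by
      intro n
      have := hproj (φ n) (fun z => M (φ n) z y) (hcol (φ n) y)
      have := congrFun this x
      simpa [Finset.sum_apply, Pi.smul_apply, smul_eq_mul] using this.symm
    rw [funext heq]
    refine tendsto_finset_sum _ (fun t _ => Filter.Tendsto.mul ?_ ?_)
    · refine tendsto_dotc (hGt t) ?_
      exact tendsto_pi_nhds.2 (fun z => hentry z y)
    · exact (tendsto_pi_nhds.1 (hGt t)) x
  -- conclude
  have hfact : Mlim = (Matrix.of fun x t => glim t x) * (Matrix.of fun t y => dotc (glim t) (fun z => Mlim z y)) := by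
    ext x y
    rw [Matrix.mul_apply]
    rw [key x y]
    exact Finset.sum_congr rfl (fun t _ => by simp [Matrix.of_apply, mul_comm])
  rw [hfact]
  refine le_trans (Matrix.rank_mul_le_right _ _) ?_
  simpa using Matrix.rank_le_card_height (Matrix.of fun t y => dotc (glim t) (fun z => Mlim z y))

/-- the (bilinear, not hermitian) pairing functional. -/
def ellL {N : ℕ} (a : Fin N → ℂ) : (Fin N → ℂ) →ₗ[ℂ] ℂ where
  toFun α := ∑ i, α i * a i
  map_add' x y := by simp [add_mul, Finset.sum_add_distrib]
  map_smul' c x := by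
    simp only [Pi.smul_apply, smul_eq_mul, RingHom.id_apply, Finset.mul_sum]
    exact Finset.sum_congr rfl (fun i _ => by ring)

/-- kernel flag subspaces. -/
def Ksp {N m' : ℕ} (u : Fin m' → Fin N → ℂ) (t : ℕ) : Submodule ℂ (Fin N → ℂ) :=
  ⨅ (s : Fin m') (_ : t ≤ (s : ℕ)), LinearMap.ker (ellL (u s))

lemma mem_Ksp {N m' : ℕ} {u : Fin m' → Fin N → ℂ} {t : ℕ} {α : Fin N → ℂ} :
    α ∈ Ksp u t ↔ ∀ s : Fin m', t ≤ (s : ℕ) → ∑ i, α i * u s i = 0 := by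
  simp [Ksp, Submodule.mem_iInf, LinearMap.mem_ker, ellL]

lemma Ksp_mono {N m' : ℕ} (u : Fin m' → Fin N → ℂ) {t t' : ℕ} (h : t ≤ t') :
    Ksp u t ≤ Ksp u t' := by
  intro α hα
  rw [mem_Ksp] at hα ⊢
  exact fun s hs => hα s (le_trans h hs)

lemma finrank_Ksp {N : ℕ} (u : Fin N → Fin N → ℂ) :
    ∀ (d t : ℕ), t + d = N → t ≤ finrank ℂ (Ksp u t) := by
  intro d
  induction d with
  | zero =>
    intro t ht
    have htop : Ksp u t = ⊤ := by
      rw [eq_top_iff]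
      intro α _
      rw [mem_Ksp]
      intro s hs
      exact absurd (lt_of_lt_of_le s.isLt (le_of_eq ht.symm)) (not_lt.2 hs)
    rw [htop]
    simp [Module.finrank_fin_fun ℂ]
    omega
  | succ d ih =>
    intro t ht
    have ht' : t < N := by omega
    have hsplit : Ksp u t = Ksp u (t+1) ⊓ LinearMap.ker (ellL (u ⟨t, ht'⟩)) := by
      apply le_antisymm
      · refine le_inf (Ksp_mono u (Nat.le_succ t)) ?_
        intro α hα
        rw [mem_Ksp] at hα
        rw [LinearMap.mem_ker]
        exact hα ⟨t, ht'⟩ (le_refl t)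
      · intro α hα
        rw [Submodule.mem_inf] at hα
        obtain ⟨h1, h2⟩ := hα
        rw [mem_Ksp] at h1 ⊢
        intro s hs
        by_cases hst : (s : ℕ) = t
        · have : s = ⟨t, ht'⟩ := by ext; exact hst
          rw [this]
          exact h2
        · exact h1 s (by omega)
    have hN : finrank ℂ (Fin N → ℂ) = N := Module.finrank_fin_fun ℂ
    set p := Ksp u (t+1)
    set k := LinearMap.ker (ellL (u ⟨t, ht'⟩)) with hk
    have h3 : finrank ℂ (p ⊔ k : Submodule ℂ (Fin N → ℂ))
        + finrank ℂ (p ⊓ k : Submodule ℂ (Fin N → ℂ))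
        = finrank ℂ p + finrank ℂ k := Submodule.finrank_sup_add_finrank_inf_eq p k
    have h4 : finrank ℂ (p ⊔ k : Submodule ℂ (Fin N → ℂ)) ≤ N := by
      have := Submodule.finrank_le (p ⊔ k : Submodule ℂ (Fin N → ℂ))
      simpa [hN] using this
    have h5 : finrank ℂ (LinearMap.range (ellL (u ⟨t, ht'⟩))) + finrank ℂ k = N := by
      have := LinearMap.finrank_range_add_finrank_ker (ellL (u ⟨t, ht'⟩))
      rwa [hN] at this
    have h6 : finrank ℂ (LinearMap.range (ellL (u ⟨t, ht'⟩))) ≤ 1 := by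
      have := Submodule.finrank_le (LinearMap.range (ellL (u ⟨t, ht'⟩)))
      simpa [Module.finrank_self] using this
    have h7 : t + 1 ≤ finrank ℂ p := ih (t+1) (by omega)
    rw [hsplit]
    omega


lemma tensorRankLE_total {a b c : ℕ} (T : Tensor a b c) : tensorRankLE T (a*(b*c)) := by
  classical
  let E : (Fin a × (Fin b × Fin c)) ≃ Fin (a*(b*c)) :=
    (Equiv.prodCongr (Equiv.refl (Fin a)) finProdFinEquiv).trans finProdFinEquiv
  refine ⟨fun s i => if i = (E.symm s).1 then T (E.symm s).1 (E.symm s).2.1 (E.symm s).2.2 else 0,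
         fun s x => if x = (E.symm s).2.1 then 1 else 0,
         fun s y => if y = (E.symm s).2.2 then 1 else 0, ?_⟩
  intro i x y
  rw [← Equiv.sum_comp E]
  simp only [Equiv.symm_apply_apply]
  rw [Fintype.sum_prod_type]
  simp only [Fintype.sum_prod_type]
  simp [Finset.sum_ite_eq, mul_ite, ite_mul]

lemma col_mem {m b c : ℕ} (S : Tensor m b c) (u : Fin m → Fin m → ℂ)
    (v : Fin m → Fin b → ℂ) (w : Fin m → Fin c → ℂ)
    (hS : ∀ i x y, S i x y = ∑ s, u s i * v s x * w s y)
    (α : Fin m → ℂ) (j' : ℕ) (hj' : j' ≤ m)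
    (hα : ∀ s : Fin m, j' ≤ (s : ℕ) → ∑ i, α i * u s i = 0) (y : Fin c) :
    (fun x => tslice S α x y) ∈
      Submodule.span ℂ (Set.range (fun t : Fin j' => v (Fin.castLE hj' t))) := by
  classical
  have hcolumn : (fun x => tslice S α x y)
      = ∑ s : Fin m, ((∑ i, α i * u s i) * w s y) • v s := by
    funext x
    rw [Finset.sum_apply]
    simp only [Pi.smul_apply, smul_eq_mul]
    calc tslice S α x y = ∑ i, α i * S i x y := rfl
      _ = ∑ i, ∑ s, α i * (u s i * v s x * w s y) := by
            refine Finset.sum_congr rfl (fun i _ => ?_)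
            rw [hS i x y, Finset.mul_sum]
      _ = ∑ s, ∑ i, α i * (u s i * v s x * w s y) := Finset.sum_comm
      _ = ∑ s, (∑ i, α i * u s i) * w s y * v s x := by
            refine Finset.sum_congr rfl (fun s _ => ?_)
            rw [Finset.sum_mul, Finset.sum_mul]
            try exact Finset.sum_congr rfl (fun i _ => by ring)
  rw [hcolumn]
  apply Submodule.sum_mem
  intro s _
  by_cases hs : (s : ℕ) < j'
  · apply Submodule.smul_mem
    apply Submodule.subset_span
    refine ⟨⟨(s : ℕ), hs⟩, ?_⟩
    show v (Fin.castLE hj' ⟨(s : ℕ), hs⟩) = v s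
    congr 1
  · rw [hα s (by omega), zero_mul, zero_smul]
    exact Submodule.zero_mem _

end Stmt4Aux

open Stmt4Aux Module Submodule Filter Topology Finset


/-- (Corollary `flagcor`, the flag condition.) If `T ∈ ℂ^m ⊗ B ⊗ C` is
`A`-concise and `R̲(T) = m`, then there is a complete flag
`A₁ ⊂ ⋯ ⊂ A_m = A^*`, `dim A_j = j`, with every element of `T(A_j)` of rank
at most `j` (i.e. `T(A_j)` lies in the cone over the `j`-th secant variety of
the Segre variety). Here the flag is indexed by `Fin (m+1)`, starting with the
trivial subspace. -/

theorem stmt4 {m b c : ℕ} (T : Tensor m b c)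
    (hconc : Function.Injective (tslice T))
    (hbr : borderRank T = m) :
    ∃ F : Fin (m + 1) → Submodule ℂ (Fin m → ℂ),
      Monotone F ∧
      (∀ j, Module.finrank ℂ (F j) = (j : ℕ)) ∧
      F (Fin.last m) = ⊤ ∧
      (∀ j, ∀ α ∈ F j, (tslice T α).rank ≤ (j : ℕ)) := by
  classical
  -- T is a limit of tensors of rank at most m
  have hmem : T ∈ closure {S : Tensor m b c | tensorRankLE S m} := by
    have hne : {r | T ∈ closure {S : Tensor m b c | tensorRankLE S r}}.Nonempty :=
      ⟨m*(b*c), subset_closure (tensorRankLE_total T)⟩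
    have h2 : borderRank T ∈ {r | T ∈ closure {S : Tensor m b c | tensorRankLE S r}} :=
      Nat.sInf_mem hne
    rwa [hbr] at h2
  obtain ⟨S, hSmem, hSlim⟩ := mem_closure_iff_seq_limit.1 hmem
  choose u v w huvw using hSmem
  -- adapted orthonormal families
  have hK : ∀ n, ∀ t : Fin m, (t : ℕ) < finrank ℂ (Ksp (u n) ((t : ℕ)+1)) := by
    intro n t
    have := finrank_Ksp (u n) (m - ((t : ℕ)+1)) ((t : ℕ)+1) (by omega)
    omega
  choose e hemem heon using
    (fun n => exists_on_family m (fun t : Fin m => Ksp (u n) ((t : ℕ)+1)) (hK n))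
  -- compactness: pass to a convergent subsequence of the orthonormal families
  have hball : ∀ n, e n ∈ Metric.closedBall (0 : Fin m → Fin m → ℂ) 1 := by
    intro n
    rw [mem_closedBall_zero_iff]
    refine (pi_norm_le_iff_of_nonneg zero_le_one).2 (fun t => ?_)
    refine (pi_norm_le_iff_of_nonneg zero_le_one).2 (fun i => ?_)
    exact coord_le_one (by simpa using heon n t t) i
  obtain ⟨ebar, -, φ, hφ, helim⟩ :=
    (isCompact_closedBall (0 : Fin m → Fin m → ℂ) 1).tendsto_subseq hball
  -- the limit family is orthonormal, hence linearly independent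
  have hone : ∀ s t, dotc (ebar s) (ebar t) = if s = t then 1 else 0 := by
    intro s t
    have h1 : Tendsto (fun n => dotc (e (φ n) s) (e (φ n) t)) atTop
        (𝓝 (dotc (ebar s) (ebar t))) :=
      tendsto_dotc (tendsto_pi_nhds.1 helim s) (tendsto_pi_nhds.1 helim t)
    have h2 : (fun n => dotc (e (φ n) s) (e (φ n) t))
        = fun _ => (if s = t then (1:ℂ) else 0) := funext (fun n => heon (φ n) s t)
    rw [h2] at h1
    exact tendsto_nhds_unique h1 tendsto_const_nhds
  have hLI : LinearIndependent ℂ ebar := linearIndependent_of_on ebar hone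
  -- the flag
  have hrangeEq : ∀ (jv : ℕ) (hjv : jv ≤ m),
      Set.range (fun t : Fin jv => ebar (Fin.castLE hjv t))
        = ebar '' {t : Fin m | (t : ℕ) < jv} := by
    intro jv hjv
    ext z
    constructor
    · rintro ⟨t, rfl⟩
      exact ⟨Fin.castLE hjv t, t.isLt, rfl⟩
    · rintro ⟨s, hs, rfl⟩
      refine ⟨⟨(s : ℕ), hs⟩, ?_⟩
      show ebar (Fin.castLE hjv ⟨(s : ℕ), hs⟩) = ebar s
      congr 1
  have hrank : ∀ (jv : ℕ) (hjv : jv ≤ m),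
      finrank ℂ (Submodule.span ℂ (ebar '' {t : Fin m | (t : ℕ) < jv})) = jv := by
    intro jv hjv
    have hli : LinearIndependent ℂ (fun t : Fin jv => ebar (Fin.castLE hjv t)) :=
      hLI.comp (Fin.castLE hjv) (Fin.castLE_injective hjv)
    rw [← hrangeEq jv hjv, finrank_span_eq_card hli, Fintype.card_fin]
  refine ⟨fun j => Submodule.span ℂ (ebar '' {t : Fin m | (t : ℕ) < (j : ℕ)}),
    ?_, ?_, ?_, ?_⟩
  · intro j j' hjj'
    apply Submodule.span_mono
    apply Set.image_mono
    intro t ht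
    simp only [Set.mem_setOf_eq] at ht ⊢
    have := Fin.le_def.1 hjj'
    omega
  · intro j
    exact hrank (j : ℕ) (Nat.lt_succ_iff.mp j.isLt)
  · apply Submodule.eq_top_of_finrank_eq
    rw [Module.finrank_fin_fun ℂ]
    exact hrank ((Fin.last m : Fin (m+1)) : ℕ) (le_of_eq rfl)
  · intro j α hα0
    have hjm : (j : ℕ) ≤ m := Nat.lt_succ_iff.mp j.isLt
    have hα : α ∈ Submodule.span ℂ (ebar '' {t : Fin m | (t : ℕ) < (j : ℕ)}) := hα0
    rw [← hrangeEq (j : ℕ) hjm] at hα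
    obtain ⟨coef, hcoef⟩ := (mem_span_range_iff_exists_fun ℂ).1 hα
    set αn : ℕ → Fin m → ℂ :=
      fun n => ∑ t : Fin (j : ℕ), coef t • e (φ n) (Fin.castLE hjm t) with hαn
    have hαnK : ∀ n, αn n ∈ Ksp (u (φ n)) (j : ℕ) := by
      intro n
      apply Submodule.sum_mem
      intro t _
      apply Submodule.smul_mem
      refine Ksp_mono (u (φ n)) ?_ (hemem (φ n) (Fin.castLE hjm t))
      have ht := t.isLt
      simp only [Fin.coe_castLE]
      omega
    have hαlim : Tendsto (fun n => αn n) atTop (𝓝 α) := by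
      rw [tendsto_pi_nhds]
      intro i
      have hαi : α i = ∑ t : Fin (j : ℕ), coef t * ebar (Fin.castLE hjm t) i := by
        rw [← hcoef]
        simp [Finset.sum_apply]
      have hv : ∀ n, αn n i = ∑ t : Fin (j : ℕ), coef t * e (φ n) (Fin.castLE hjm t) i := by
        intro n
        simp [hαn, Finset.sum_apply]
      rw [funext hv, hαi]
      refine tendsto_finset_sum _ (fun t _ => Filter.Tendsto.mul tendsto_const_nhds ?_)
      exact tendsto_pi_nhds.1 (tendsto_pi_nhds.1 helim (Fin.castLE hjm t)) i
    have hSφ : Tendsto (fun n => S (φ n)) atTop (𝓝 T) := hSlim.comp hφ.tendsto_atTop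
    have hMlim : Tendsto (fun n => tslice (S (φ n)) (αn n)) atTop (𝓝 (tslice T α)) := by
      refine tendsto_pi_nhds.2 ?_
      intro x
      rw [tendsto_pi_nhds]
      intro y
      have hgoal : ∀ n, tslice (S (φ n)) (αn n) x y = ∑ i, αn n i * S (φ n) i x y :=
        fun n => rfl
      have hT : tslice T α x y = ∑ i, α i * T i x y := rfl
      rw [funext hgoal, hT]
      refine tendsto_finset_sum _ (fun i _ => Filter.Tendsto.mul ?_ ?_)
      · exact tendsto_pi_nhds.1 hαlim i
      · exact tendsto_pi_nhds.1 (tendsto_pi_nhds.1 (tendsto_pi_nhds.1 hSφ i) x) y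
    refine rank_le_of_tendsto (fun n => tslice (S (φ n)) (αn n)) (tslice T α) hMlim
      (fun n => Submodule.span ℂ
        (Set.range (fun t : Fin (j : ℕ) => v (φ n) (Fin.castLE hjm t)))) ?_ ?_
    · intro n
      have h1 := finrank_range_le_card (R := ℂ)
        (fun t : Fin (j : ℕ) => v (φ n) (Fin.castLE hjm t))
      simpa [Set.finrank, Fintype.card_fin] using h1
    · intro n y
      refine col_mem (S (φ n)) (u (φ n)) (v (φ n)) (w (φ n)) (huvw (φ n)) (αn n)
        (j : ℕ) hjm ?_ y
      have hk := hαnK n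
      rw [mem_Ksp] at hk
      exact hk


end
end

section
/- (Substitution method.) Fix a basis a₁,…,a_a of A and write T = Σ_{i=1}^{a} aᵢ⊗Mᵢ with Mᵢ ∈ B⊗C, and suppose M₁ ≠ 0 and R(T) = r. Then there exist constants λ₂,…,λ_a ∈ ℂ such that the tensor T̃ := Σ_{j=2}^{a} aⱼ⊗(Mⱼ − λⱼM₁), regarded as an element of (span{a₂,…,a_a})⊗B⊗C, has rank at most r−1. Moreover, if M₁ has rank one as a linear map C^* → B, then for every choice of λ₂,…,λ_a ∈ ℂ the resulting tensor T̃ has rank at least r−1. -/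
open scoped BigOperators

noncomputable section

lemma aux_exists_rankLE {a b c : ℕ} (T : Tensor a b c) : ∃ r, tensorRankLE T r := by
  refine ⟨Fintype.card (Fin a × Fin b × Fin c), ?_⟩
  set e := (Fintype.equivFin (Fin a × Fin b × Fin c)).symm
  refine ⟨fun s i => if (e s).1 = i then 1 else 0,
         fun s j => if (e s).2.1 = j then 1 else 0,
         fun s k => if (e s).2.2 = k then T (e s).1 (e s).2.1 (e s).2.2 else 0, ?_⟩
  intro i j k
  rw [show (∑ s, _) = ∑ p : Fin a × Fin b × Fin c,
      (if p.1 = i then (1:ℂ) else 0) * (if p.2.1 = j then 1 else 0) *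
      (if p.2.2 = k then T p.1 p.2.1 p.2.2 else 0) from Equiv.sum_comp e _]
  simp [Fintype.sum_prod_type]

lemma aux_rankLE_rank {a b c : ℕ} (T : Tensor a b c) : tensorRankLE T (tensorRank T) :=
  Nat.sInf_mem (aux_exists_rankLE T)

lemma aux_rank_le {a b c : ℕ} (T : Tensor a b c) {r : ℕ} (h : tensorRankLE T r) :
    tensorRank T ≤ r := Nat.sInf_le h

lemma aux_rank_one {b c : ℕ} (M : Matrix (Fin b) (Fin c) ℂ) (h : M.rank = 1) :
    ∃ (v : Fin b → ℂ) (w : Fin c → ℂ), ∀ j k, M j k = v j * w k := by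
  have h1 : Module.finrank ℂ (LinearMap.range M.mulVecLin) = 1 := h
  obtain ⟨v, hv0, hspan⟩ := finrank_eq_one_iff'.mp h1
  have hcol : ∀ k, ∃ cc : ℂ, ∀ j, M j k = (v : Fin b → ℂ) j * cc := by
    intro k
    obtain ⟨cc, hcc⟩ := hspan ⟨M.mulVec (Pi.single k 1),
      LinearMap.mem_range.mpr ⟨Pi.single k 1, rfl⟩⟩
    refine ⟨cc, fun j => ?_⟩
    have h2 := congrFun (congrArg Subtype.val hcc) j
    simp [Matrix.mulVec_single] at h2
    rw [← h2]; exact (mul_comm _ _)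
  choose w hw using hcol
  exact ⟨fun j => (v : Fin b → ℂ) j, w, fun j k => hw k j⟩

/-- (Proposition `prop:slice`, the substitution method.) Write
`T = Σᵢ aᵢ ⊗ Mᵢ` with `M₁ = T 0 ≠ 0` and `R(T) = r`. Then there exist
constants `λⱼ` so that `T̃ = Σ_{j≥2} aⱼ ⊗ (Mⱼ - λⱼ M₁)` has rank at most
`r - 1`; and if `M₁` has rank one, then for every choice of the `λⱼ` the
resulting tensor has rank at least `r - 1`. -/
theorem stmt6 {a b c : ℕ} (T : Tensor (a + 1) b c) (r : ℕ)
    (hM : T 0 ≠ 0) (hr : tensorRank T = r) :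
    (∃ lam : Fin a → ℂ,
      tensorRank (fun (i : Fin a) (j : Fin b) (k : Fin c) =>
        T i.succ j k - lam i * T 0 j k) ≤ r - 1) ∧
    ((Matrix.of (T 0)).rank = 1 →
      ∀ lam : Fin a → ℂ,
        r - 1 ≤ tensorRank (fun (i : Fin a) (j : Fin b) (k : Fin c) =>
          T i.succ j k - lam i * T 0 j k)) := by
  constructor
  · have hle : tensorRankLE T r := hr ▸ aux_rankLE_rank T
    obtain ⟨u, v, w, hT⟩ := hle
    have hex : ∃ s₀ : Fin r, u s₀ 0 ≠ 0 := by
      by_contra h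
      push_neg at h
      apply hM
      funext j k
      rw [hT 0 j k]
      simp [h]
    obtain ⟨s₀, hs₀⟩ := hex
    obtain ⟨r', rfl⟩ : ∃ r', r = r' + 1 := ⟨r - 1, by have := s₀.pos; omega⟩
    refine ⟨fun i => u s₀ i.succ / u s₀ 0, ?_⟩
    have h1 : (r' + 1) - 1 = r' := rfl
    rw [h1]
    apply aux_rank_le
    refine ⟨fun t i => u (s₀.succAbove t) i.succ -
        (u s₀ i.succ / u s₀ 0) * u (s₀.succAbove t) 0,
      fun t j => v (s₀.succAbove t) j, fun t k => w (s₀.succAbove t) k, ?_⟩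
    intro i j k
    beta_reduce
    have e1 := hT i.succ j k
    have e2 := hT 0 j k
    rw [Fin.sum_univ_succAbove _ s₀] at e1 e2
    rw [e1, e2]
    simp only [sub_mul, mul_assoc, Finset.sum_sub_distrib, ← Finset.mul_sum]
    field_simp
    ring
  · intro hrank lam
    obtain ⟨v₀, w₀, hvw⟩ := aux_rank_one (Matrix.of (T 0)) hrank
    set Tt : Tensor a b c := fun i j k => T i.succ j k - lam i * T 0 j k with hTtdef
    obtain ⟨u, v, w, hTt⟩ := aux_rankLE_rank Tt
    have hle : tensorRankLE T (tensorRank Tt + 1) := by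
      refine ⟨Fin.cons (Fin.cons 1 lam) (fun t => Fin.cons 0 (u t)),
        Fin.cons v₀ v, Fin.cons w₀ w, ?_⟩
      intro i j k
      have hvw' : T 0 j k = v₀ j * w₀ k := hvw j k
      induction i using Fin.cases with
      | zero =>
        rw [Fin.sum_univ_succ]
        simp [hvw']
      | succ i =>
        rw [Fin.sum_univ_succ]
        simp only [Fin.cons_zero, Fin.cons_succ]
        have h2 : T i.succ j k - lam i * T 0 j k = ∑ s, u s i * v s j * w s k := hTt i j k
        linear_combination h2 + lam i * hvw'
    have h3 := aux_rank_le T hle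
    omega

end
end

section
/- Let T_{end,7} ∈ ℂ⁷⊗ℂ⁷⊗ℂ⁷ be the tensor whose space of slices T_{end,7}(A^*) ⊆ Mat₇(ℂ) consists of all matrices of the form x₁·Id₇ + N, where N has nonzero entries only in rows 5,6,7 and columns 1–4, given by: row 5 = (0, x₂+x₇, x₃, x₄), row 6 = (x₂, x₃, x₅, x₆), row 7 = (x₄, x₅, x₆, x₇), with x₁,…,x₇ ∈ ℂ arbitrary. Then T_{end,7}(A^*) is a commutative subalgebra-like space: it is closed under matrix multiplication (in fact the product of any two of the matrices N above is zero), yet T_{end,7}(A^*) contains no nonzero rank-one matrix, and consequently the border rank of T_{end,7} is at least 8. -/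
open scoped BigOperators

noncomputable section

/-- The tensor `T_{end,7}` (0-indexed): slices are `x₁·Id₇ + N` with `N`
supported in rows 5,6,7 and columns 1–4:
row 5 = (0, x₂+x₇, x₃, x₄), row 6 = (x₂, x₃, x₅, x₆), row 7 = (x₄, x₅, x₆, x₇). -/
def Tend7 : Tensor 7 7 7 := fun i j k =>
  (if i = 0 ∧ j = k then (1 : ℂ) else 0) +
  (if i = 1 ∧ (j = 4 ∧ k = 1 ∨ j = 5 ∧ k = 0) then 1 else 0) +
  (if i = 2 ∧ (j = 4 ∧ k = 2 ∨ j = 5 ∧ k = 1) then 1 else 0) +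
  (if i = 3 ∧ (j = 4 ∧ k = 3 ∨ j = 6 ∧ k = 0) then 1 else 0) +
  (if i = 4 ∧ (j = 5 ∧ k = 2 ∨ j = 6 ∧ k = 1) then 1 else 0) +
  (if i = 5 ∧ (j = 5 ∧ k = 3 ∨ j = 6 ∧ k = 2) then 1 else 0) +
  (if i = 6 ∧ (j = 4 ∧ k = 1 ∨ j = 6 ∧ k = 3) then 1 else 0)

/-! ### Auxiliary machinery for `stmt9` -/

namespace Stmt9Aux

/-- The nilpotent part of a slice of `Tend7`. -/
def Nmat (α : Fin 7 → ℂ) : Matrix (Fin 7) (Fin 7) ℂ :=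
  Matrix.of fun j k =>
    if j = 4 then (if k = 1 then α 1 + α 6 else if k = 2 then α 2 else if k = 3 then α 3 else 0)
    else if j = 5 then (if k = 0 then α 1 else if k = 1 then α 2 else if k = 2 then α 4 else if k = 3 then α 5 else 0)
    else if j = 6 then (if k = 0 then α 3 else if k = 1 then α 4 else if k = 2 then α 5 else if k = 3 then α 6 else 0)
    else 0

set_option maxHeartbeats 2000000 in
lemma tslice_eq (α : Fin 7 → ℂ) :
    tslice Tend7 α = α 0 • (1 : Matrix (Fin 7) (Fin 7) ℂ) + Nmat α := by
  ext j k
  fin_cases j <;> fin_cases k <;>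
    simp [tslice, Tend7, Nmat, Fin.sum_univ_seven, Matrix.one_apply]

lemma Nmat_mul (α β : Fin 7 → ℂ) : Nmat α * Nmat β = 0 := by
  ext j k
  simp [Nmat, Matrix.mul_apply, Fin.sum_univ_seven]

lemma slice_mul (α β : Fin 7 → ℂ) :
    tslice Tend7 α * tslice Tend7 β
      = (α 0 * β 0) • (1 : Matrix (Fin 7) (Fin 7) ℂ) + (α 0 • Nmat β + β 0 • Nmat α) := by
  rw [tslice_eq, tslice_eq, add_mul, mul_add, mul_add, Nmat_mul]
  simp only [smul_mul_assoc, mul_smul_comm, one_mul, mul_one, smul_smul, add_zero]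
  rw [mul_comm (β 0) (α 0)]
  abel

lemma swap7 (X Y Z W ui uj vk vl : ℂ) (hX : X = ui * vk) (hY : Y = uj * vl)
    (hZ : Z = ui * vl) (hW : W = uj * vk) : X * Y = Z * W := by
  rw [hX, hY, hZ, hW]; ring

lemma key7 (x0 a b c d e f u0 u1 u4 u5 u6 v0 v1 v2 v3 : ℂ)
    (e00 : x0 = u0 * v0) (e11 : x0 = u1 * v1) (e01 : (0:ℂ) = u0 * v1) (e10 : (0:ℂ) = u1 * v0)
    (e40 : (0:ℂ) = u4 * v0) (e41 : a + f = u4 * v1) (e42 : b = u4 * v2) (e43 : c = u4 * v3)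
    (e50 : a = u5 * v0) (e51 : b = u5 * v1) (e52 : d = u5 * v2) (e53 : e = u5 * v3)
    (e60 : c = u6 * v0) (e61 : d = u6 * v1) (e62 : e = u6 * v2) (e63 : f = u6 * v3) :
    x0 = 0 ∧ a = 0 ∧ b = 0 ∧ c = 0 ∧ d = 0 ∧ e = 0 ∧ f = 0 := by
  have hx0 : x0 = 0 := mul_self_eq_zero.mp (by
    have h := swap7 x0 x0 0 0 u0 u1 v0 v1 e00 e11 e01 e10; linear_combination h)
  have hc : c = 0 := mul_self_eq_zero.mp (by
    have h := swap7 c c f 0 u6 u4 v0 v3 e60 e43 e63 e40; linear_combination h)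
  have haf : a * f = 0 := by
    have h := swap7 a f e c u5 u6 v0 v3 e50 e63 e53 e60; linear_combination h + e * hc
  have ha : a = 0 := mul_self_eq_zero.mp (by
    have h := swap7 a (a + f) b 0 u5 u4 v0 v1 e50 e41 e51 e40; linear_combination h - haf)
  have hf : f = 0 := mul_self_eq_zero.mp (by
    have h := swap7 f (a + f) d c u6 u4 v3 v1 e63 e41 e61 e43
    linear_combination h - haf + d * hc)
  have hb : b = 0 := mul_self_eq_zero.mp (by
    have h := swap7 b b d (a + f) u5 u4 v1 v2 e51 e42 e52 e41
    linear_combination h + d * ha + d * hf)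
  have he : e = 0 := mul_self_eq_zero.mp (by
    have h := swap7 e e d f u5 u6 v3 v2 e53 e62 e52 e63; linear_combination h + d * hf)
  have hd : d = 0 := mul_self_eq_zero.mp (by
    have h := swap7 d d b e u5 u6 v2 v1 e52 e61 e51 e62; linear_combination h + e * hb)
  exact ⟨hx0, ha, hb, hc, hd, he, hf⟩

/-- If every entry of the slice at `α` is `u j * v k`, then `α = 0`. -/
lemma alpha_zero_of_decomp (α u v : Fin 7 → ℂ)
    (h : ∀ j k, tslice Tend7 α j k = u j * v k) : α = 0 := by
  have h' : ∀ j k : Fin 7,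
      (α 0 • (1 : Matrix (Fin 7) (Fin 7) ℂ) + Nmat α) j k = u j * v k := by
    intro j k; rw [← tslice_eq]; exact h j k
  have e00 : α 0 = u 0 * v 0 := by simpa [Nmat, Matrix.one_apply] using h' 0 0
  have e11 : α 0 = u 1 * v 1 := by simpa [Nmat, Matrix.one_apply] using h' 1 1
  have e01 : (0:ℂ) = u 0 * v 1 := by simpa [Nmat, Matrix.one_apply] using h' 0 1
  have e10 : (0:ℂ) = u 1 * v 0 := by simpa [Nmat, Matrix.one_apply] using h' 1 0
  have e40 : (0:ℂ) = u 4 * v 0 := by simpa [Nmat, Matrix.one_apply] using h' 4 0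
  have e41 : α 1 + α 6 = u 4 * v 1 := by simpa [Nmat, Matrix.one_apply] using h' 4 1
  have e42 : α 2 = u 4 * v 2 := by simpa [Nmat, Matrix.one_apply] using h' 4 2
  have e43 : α 3 = u 4 * v 3 := by simpa [Nmat, Matrix.one_apply] using h' 4 3
  have e50 : α 1 = u 5 * v 0 := by simpa [Nmat, Matrix.one_apply] using h' 5 0
  have e51 : α 2 = u 5 * v 1 := by simpa [Nmat, Matrix.one_apply] using h' 5 1
  have e52 : α 4 = u 5 * v 2 := by simpa [Nmat, Matrix.one_apply] using h' 5 2
  have e53 : α 5 = u 5 * v 3 := by simpa [Nmat, Matrix.one_apply] using h' 5 3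
  have e60 : α 3 = u 6 * v 0 := by simpa [Nmat, Matrix.one_apply] using h' 6 0
  have e61 : α 4 = u 6 * v 1 := by simpa [Nmat, Matrix.one_apply] using h' 6 1
  have e62 : α 5 = u 6 * v 2 := by simpa [Nmat, Matrix.one_apply] using h' 6 2
  have e63 : α 6 = u 6 * v 3 := by simpa [Nmat, Matrix.one_apply] using h' 6 3
  obtain ⟨h0, h1, h2, h3, h4, h5, h6⟩ :=
    key7 (α 0) (α 1) (α 2) (α 3) (α 4) (α 5) (α 6) (u 0) (u 1) (u 4) (u 5) (u 6)
      (v 0) (v 1) (v 2) (v 3) e00 e11 e01 e10 e40 e41 e42 e43 e50 e51 e52 e53 e60 e61 e62 e63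
  funext i
  fin_cases i <;> assumption

open Submodule in
lemma rank_one_decomp {M : Matrix (Fin 7) (Fin 7) ℂ} (h : M.rank = 1) :
    ∃ u v : Fin 7 → ℂ, ∀ i j, M i j = u i * v j := by
  rw [Matrix.rank_eq_finrank_span_cols] at h
  obtain ⟨w, hw0, hall⟩ := finrank_eq_one_iff'.mp h
  choose c hc using fun j : Fin 7 =>
    hall ⟨M.transpose j, Submodule.subset_span (Set.mem_range_self j)⟩
  refine ⟨fun i => (w : Fin 7 → ℂ) i, c, fun i j => ?_⟩
  have := congrArg (Subtype.val) (hc j)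
  have h2 := congrFun this i
  simp only [Submodule.coe_smul, Pi.smul_apply, smul_eq_mul] at h2
  rw [Matrix.transpose_apply] at h2
  rw [← h2]; ring

lemma tslice_zero : tslice Tend7 (0 : Fin 7 → ℂ) = 0 := by
  ext j k; simp [tslice]

lemma rank_ne_one (α : Fin 7 → ℂ) : (tslice Tend7 α).rank ≠ 1 := by
  intro hr
  obtain ⟨u, v, huv⟩ := rank_one_decomp hr
  have hα : α = 0 := alpha_zero_of_decomp α u v huv
  rw [hα, tslice_zero, Matrix.rank_zero] at hr
  exact one_ne_zero hr.symm

end Stmt9Aux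


open Filter Topology

namespace Stmt9Aux

/-- The slice map as a linear map into the plain function space. -/
def sliceL (T : Tensor 7 7 7) : (Fin 7 → ℂ) →ₗ[ℂ] (Fin 7 → Fin 7 → ℂ) where
  toFun α := fun j k => ∑ i, α i * T i j k
  map_add' α β := by
    funext j k
    simp [add_mul, Finset.sum_add_distrib]
  map_smul' c α := by
    funext j k
    simp [Finset.mul_sum, mul_assoc]

lemma sliceL_sub (S T : Tensor 7 7 7) (α : Fin 7 → ℂ) :
    sliceL S α - sliceL T α = sliceL (S - T) α := by
  funext j k
  simp [sliceL, sub_mul, Finset.sum_sub_distrib, mul_sub]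

lemma sliceL_bound (D : Tensor 7 7 7) (α : Fin 7 → ℂ) :
    ‖sliceL D α‖ ≤ 7 * ‖D‖ * ‖α‖ := by
  have h0 : (0:ℝ) ≤ 7 * ‖D‖ * ‖α‖ := by positivity
  rw [pi_norm_le_iff_of_nonneg h0]
  intro j
  rw [pi_norm_le_iff_of_nonneg h0]
  intro k
  show ‖∑ i, α i * D i j k‖ ≤ 7 * ‖D‖ * ‖α‖
  calc ‖∑ i, α i * D i j k‖ ≤ ∑ i : Fin 7, ‖α i * D i j k‖ := norm_sum_le _ _
    _ ≤ ∑ _i : Fin 7, ‖D‖ * ‖α‖ := by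
        refine Finset.sum_le_sum fun i _ => ?_
        rw [norm_mul, mul_comm]
        gcongr
        · exact le_trans (norm_le_pi_norm _ k)
            (le_trans (norm_le_pi_norm _ j) (norm_le_pi_norm D i))
        · exact norm_le_pi_norm α i
    _ = 7 * ‖D‖ * ‖α‖ := by
        rw [Finset.sum_const, Finset.card_univ, Fintype.card_fin]
        push_cast; ring

lemma sliceL_Tend7_ker : LinearMap.ker (sliceL Tend7) = ⊥ := by
  rw [LinearMap.ker_eq_bot']
  intro α h
  have hv : ∀ j k : Fin 7, (∑ i, α i * Tend7 i j k) = 0 := fun j k =>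
    congrFun (congrFun h j) k
  have h0 := hv 0 0
  have h1 := hv 5 0
  have h2 := hv 5 1
  have h3 := hv 6 0
  have h4 := hv 6 1
  have h5 := hv 6 2
  have h6 := hv 6 3
  simp [Tend7, Fin.sum_univ_seven] at h0 h1 h2 h3 h4 h5 h6
  funext i
  fin_cases i <;> simp_all

lemma exists_K : ∃ K : ℝ, 0 < K ∧ ∀ α : Fin 7 → ℂ, ‖α‖ ≤ K * ‖sliceL Tend7 α‖ := by
  obtain ⟨g, hg⟩ := LinearMap.exists_leftInverse_of_injective _ sliceL_Tend7_ker
  let G := LinearMap.toContinuousLinearMap g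
  refine ⟨‖G‖ + 1, by positivity, fun α => ?_⟩
  have h1 : G (sliceL Tend7 α) = α := LinearMap.congr_fun hg α
  calc ‖α‖ = ‖G (sliceL Tend7 α)‖ := by rw [h1]
    _ ≤ ‖G‖ * ‖sliceL Tend7 α‖ := G.le_opNorm _
    _ ≤ (‖G‖ + 1) * ‖sliceL Tend7 α‖ :=
        mul_le_mul_of_nonneg_right (by linarith) (norm_nonneg _)

def outer (b c : Fin 7 → ℂ) : Fin 7 → Fin 7 → ℂ := fun j k => b j * c k

lemma key_step (K : ℝ) (hK : 0 < K) (hKb : ∀ α : Fin 7 → ℂ, ‖α‖ ≤ K * ‖sliceL Tend7 α‖)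
    (S : Tensor 7 7 7) (hS7 : tensorRankLE S 7)
    (hSd : ‖S - Tend7‖ ≤ (14 * K)⁻¹) :
    ∃ (α b c : Fin 7 → ℂ), ‖α‖ ≤ 2 * K ∧ ‖b‖ = 1 ∧ ‖c‖ = 1 ∧ sliceL S α = outer b c := by
  classical
  have hlow : ∀ α : Fin 7 → ℂ, ‖α‖ ≤ 2 * K * ‖sliceL S α‖ := by
    intro α
    have h1 := hKb α
    have h2 : ‖sliceL Tend7 α - sliceL S α‖ ≤ 7 * ‖S - Tend7‖ * ‖α‖ := by
      rw [norm_sub_rev, sliceL_sub]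
      exact sliceL_bound _ _
    have h3 : ‖sliceL Tend7 α‖ ≤ ‖sliceL S α‖ + ‖sliceL Tend7 α - sliceL S α‖ :=
      norm_le_insert' _ _
    have h4 : 7 * ‖S - Tend7‖ * ‖α‖ ≤ 7 * (14*K)⁻¹ * ‖α‖ := by
      gcongr
    have h5 : K * (7 * (14*K)⁻¹ * ‖α‖) = ‖α‖ / 2 := by
      field_simp
      ring
    have h6 : ‖α‖ ≤ K * (‖sliceL S α‖ + 7 * (14*K)⁻¹ * ‖α‖) := by
      calc ‖α‖ ≤ K * ‖sliceL Tend7 α‖ := h1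
        _ ≤ K * (‖sliceL S α‖ + 7 * (14*K)⁻¹ * ‖α‖) := by
            apply mul_le_mul_of_nonneg_left _ hK.le
            linarith
    rw [mul_add, h5] at h6
    linarith
  have hker : LinearMap.ker (sliceL S) = ⊥ := by
    rw [LinearMap.ker_eq_bot']
    intro α h
    have := hlow α
    rw [h, norm_zero, mul_zero] at this
    exact norm_le_zero_iff.mp this
  obtain ⟨u, v, w, hs⟩ := hS7
  set g : Fin 7 → (Fin 7 → Fin 7 → ℂ) := fun s => outer (v s) (w s) with hgdef
  have hmem : ∀ α : Fin 7 → ℂ, sliceL S α ∈ Submodule.span ℂ (Set.range g) := by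
    intro α
    have hrepr : sliceL S α = ∑ s : Fin 7, (∑ i, α i * u s i) • g s := by
      funext j k
      show (∑ i, α i * S i j k) = _
      rw [show ((∑ s : Fin 7, (∑ i, α i * u s i) • g s) j k)
            = ∑ s : Fin 7, ((∑ i, α i * u s i) • g s) j k by
          rw [Finset.sum_apply, Finset.sum_apply]]
      calc (∑ i, α i * S i j k)
          = ∑ i, ∑ s, α i * (u s i * v s j * w s k) := by
            refine Finset.sum_congr rfl fun i _ => ?_
            rw [hs, Finset.mul_sum]
        _ = ∑ s, ∑ i, α i * (u s i * v s j * w s k) := Finset.sum_comm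
        _ = ∑ s : Fin 7, ((∑ i, α i * u s i) • g s) j k := by
            refine Finset.sum_congr rfl fun s _ => ?_
            simp only [Pi.smul_apply, smul_eq_mul, hgdef, outer, Finset.sum_mul]
            exact Finset.sum_congr rfl fun i _ => by ring
    rw [hrepr]
    exact Submodule.sum_mem _ fun s _ =>
      Submodule.smul_mem _ _ (Submodule.subset_span ⟨s, rfl⟩)
  have hrank : Module.finrank ℂ (LinearMap.range (sliceL S)) = 7 := by
    have hrn := LinearMap.finrank_range_add_finrank_ker (sliceL S)
    rw [hker, finrank_bot, add_zero] at hrn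
    rw [hrn]
    simp [Module.finrank_pi]
  have hrange : LinearMap.range (sliceL S) = Submodule.span ℂ (Set.range g) := by
    apply Submodule.eq_of_le_of_finrank_le
    · rintro x ⟨α, rfl⟩
      exact hmem α
    · rw [hrank]
      calc Module.finrank ℂ (Submodule.span ℂ (Set.range g))
          ≤ (Set.range g).toFinset.card := finrank_span_le_card _
        _ ≤ 7 := by
            rw [Set.toFinset_range]
            exact le_trans Finset.card_image_le (by simp)
  have hex : ∃ s, g s ≠ 0 := by
    by_contra hno
    push_neg at hno
    have hbot : Submodule.span ℂ (Set.range g) = ⊥ := by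
      rw [Submodule.span_eq_bot]
      rintro x ⟨s, rfl⟩
      exact hno s
    rw [hbot] at hrange
    rw [hrange, finrank_bot] at hrank
    exact absurd hrank (by norm_num)
  obtain ⟨s0, hs0⟩ := hex
  have hv0 : v s0 ≠ 0 := by
    intro hv
    apply hs0
    funext j k
    simp [hgdef, outer, hv]
  have hw0 : w s0 ≠ 0 := by
    intro hw
    apply hs0
    funext j k
    simp [hgdef, outer, hw]
  set b : Fin 7 → ℂ := (‖v s0‖⁻¹ : ℂ) • v s0 with hbdef
  set c : Fin 7 → ℂ := (‖w s0‖⁻¹ : ℂ) • w s0 with hcdef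
  have hbn : ‖b‖ = 1 := norm_smul_inv_norm (𝕜 := ℂ) hv0
  have hcn : ‖c‖ = 1 := norm_smul_inv_norm (𝕜 := ℂ) hw0
  have houter : outer b c = ((‖v s0‖⁻¹ : ℂ) * (‖w s0‖⁻¹ : ℂ)) • g s0 := by
    funext j k
    simp only [outer, hbdef, hcdef, hgdef, Pi.smul_apply, smul_eq_mul]
    ring
  have hmem2 : outer b c ∈ LinearMap.range (sliceL S) := by
    rw [houter, hrange]
    exact Submodule.smul_mem _ _ (Submodule.subset_span ⟨s0, rfl⟩)
  obtain ⟨α, hα⟩ := hmem2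
  refine ⟨α, b, c, ?_, hbn, hcn, hα⟩
  have h1 := hlow α
  rw [hα] at h1
  have h2 : ‖outer b c‖ ≤ 1 := by
    rw [pi_norm_le_iff_of_nonneg zero_le_one]
    intro j
    rw [pi_norm_le_iff_of_nonneg zero_le_one]
    intro k
    show ‖b j * c k‖ ≤ 1
    rw [norm_mul]
    have hb1 : ‖b j‖ ≤ 1 := hbn ▸ norm_le_pi_norm b j
    have hc1 : ‖c k‖ ≤ 1 := hcn ▸ norm_le_pi_norm c k
    exact mul_le_one₀ hb1 (norm_nonneg _) hc1
  calc ‖α‖ ≤ 2 * K * ‖outer b c‖ := h1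
    _ ≤ 2 * K * 1 := by gcongr
    _ = 2 * K := mul_one _

end Stmt9Aux

namespace Stmt9Aux

lemma not_mem_closure7 : Tend7 ∉ closure {S : Tensor 7 7 7 | tensorRankLE S 7} := by
  obtain ⟨K, hK, hKb⟩ := exists_K
  intro hcl
  obtain ⟨f, hf, hft⟩ := mem_closure_iff_seq_limit.mp hcl
  have hε : (0:ℝ) < (14*K)⁻¹ := by positivity
  obtain ⟨N, hN⟩ := (Metric.tendsto_atTop.mp hft) _ hε
  set g : ℕ → Tensor 7 7 7 := fun n => f (n + N) with hgdef
  have hg7 : ∀ n, tensorRankLE (g n) 7 := fun n => hf (n + N)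
  have hgd : ∀ n, ‖g n - Tend7‖ ≤ (14*K)⁻¹ := by
    intro n
    have := hN (n + N) (Nat.le_add_left N n)
    rw [dist_eq_norm] at this
    exact this.le
  have hgt : Filter.Tendsto g Filter.atTop (nhds Tend7) :=
    hft.comp (Filter.tendsto_add_atTop_nat N)
  choose α b c hα hb hc heq using fun n => key_step K hK hKb (g n) (hg7 n) (hgd n)
  set x : ℕ → (Fin 7 → ℂ) × (Fin 7 → ℂ) × (Fin 7 → ℂ) := fun n => (α n, b n, c n) with hxdef
  have hxb : ∀ n, x n ∈ Metric.closedBall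
      (0 : (Fin 7 → ℂ) × (Fin 7 → ℂ) × (Fin 7 → ℂ)) (2*K + 1) := by
    intro n
    rw [Metric.mem_closedBall, dist_zero_right]
    rw [Prod.norm_def, Prod.norm_def]
    have h1 := hα n
    have h2 := hb n
    have h3 := hc n
    apply max_le (by linarith)
    apply max_le (by simp [hxdef, h2]; linarith) (by simp [hxdef, h3]; linarith)
  obtain ⟨l, -, φ, hφ, hxl⟩ := (isCompact_closedBall _ _).tendsto_subseq hxb
  have hαl : Filter.Tendsto (fun n => α (φ n)) Filter.atTop (nhds l.1) :=
    (continuous_fst.tendsto l).comp hxl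
  have hbl : Filter.Tendsto (fun n => b (φ n)) Filter.atTop (nhds l.2.1) :=
    ((continuous_fst.tendsto l.2).comp ((continuous_snd.tendsto l).comp hxl))
  have hcll : Filter.Tendsto (fun n => c (φ n)) Filter.atTop (nhds l.2.2) :=
    ((continuous_snd.tendsto l.2).comp ((continuous_snd.tendsto l).comp hxl))
  have hBnorm : ‖l.2.1‖ = 1 := by
    have h1 : Filter.Tendsto (fun n => ‖b (φ n)‖) Filter.atTop (nhds ‖l.2.1‖) := hbl.norm
    have h2 : (fun n => ‖b (φ n)‖) = fun _ => 1 := funext fun n => hb (φ n)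
    rw [h2] at h1
    exact (tendsto_nhds_unique tendsto_const_nhds h1).symm
  have hCnorm : ‖l.2.2‖ = 1 := by
    have h1 : Filter.Tendsto (fun n => ‖c (φ n)‖) Filter.atTop (nhds ‖l.2.2‖) := hcll.norm
    have h2 : (fun n => ‖c (φ n)‖) = fun _ => 1 := funext fun n => hc (φ n)
    rw [h2] at h1
    exact (tendsto_nhds_unique tendsto_const_nhds h1).symm
  have hg2 : Filter.Tendsto (fun n => g (φ n)) Filter.atTop (nhds Tend7) :=
    hgt.comp hφ.tendsto_atTop
  have hmain : ∀ j k : Fin 7, tslice Tend7 l.1 j k = l.2.1 j * l.2.2 k := by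
    intro j k
    have hL : Filter.Tendsto (fun n => ∑ i, α (φ n) i * g (φ n) i j k)
        Filter.atTop (nhds (∑ i, l.1 i * Tend7 i j k)) := by
      apply tendsto_finset_sum
      intro i _
      apply Filter.Tendsto.mul
      · exact ((continuous_apply i).tendsto l.1).comp hαl
      · exact ((continuous_apply k).tendsto _).comp
          (((continuous_apply j).tendsto _).comp
            (((continuous_apply i).tendsto _).comp hg2))
    have hR : Filter.Tendsto (fun n => b (φ n) j * c (φ n) k)
        Filter.atTop (nhds (l.2.1 j * l.2.2 k)) :=
      (((continuous_apply j).tendsto _).comp hbl).mul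
        (((continuous_apply k).tendsto _).comp hcll)
    have hEq : (fun n => ∑ i, α (φ n) i * g (φ n) i j k)
        = fun n => b (φ n) j * c (φ n) k := by
      funext n
      exact congrFun (congrFun (heq (φ n)) j) k
    rw [hEq] at hL
    exact tendsto_nhds_unique hL hR
  have hzero : l.1 = 0 := alpha_zero_of_decomp l.1 l.2.1 l.2.2 hmain
  obtain ⟨j0, hj0⟩ : ∃ j, l.2.1 j ≠ 0 := by
    by_contra hno
    push_neg at hno
    have : l.2.1 = 0 := funext hno
    rw [this, norm_zero] at hBnorm
    norm_num at hBnorm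
  obtain ⟨k0, hk0⟩ : ∃ k, l.2.2 k ≠ 0 := by
    by_contra hno
    push_neg at hno
    have : l.2.2 = 0 := funext hno
    rw [this, norm_zero] at hCnorm
    norm_num at hCnorm
  have := hmain j0 k0
  rw [hzero, tslice_zero] at this
  exact (mul_ne_zero hj0 hk0) (by simpa using this.symm)

lemma rankLE_mono {a b c r r' : ℕ} (h : r ≤ r') {T : Tensor a b c} :
    tensorRankLE T r → tensorRankLE T r' := by
  rintro ⟨u, v, w, hT⟩
  obtain ⟨d, rfl⟩ := Nat.exists_eq_add_of_le h
  refine ⟨fun s => if h : (s : ℕ) < r then u ⟨s, h⟩ else 0,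
          fun s => if h : (s : ℕ) < r then v ⟨s, h⟩ else 0,
          fun s => if h : (s : ℕ) < r then w ⟨s, h⟩ else 0, ?_⟩
  intro i j k
  rw [hT i j k, Fin.sum_univ_add]
  have h2 : ∀ s : Fin d, ¬ ((Fin.natAdd r s : ℕ) < r) := by
    intro s
    simp [Fin.natAdd]
  simp only [Fin.coe_castAdd, Fin.is_lt, dif_pos, Fin.eta, h2, dif_neg, zero_mul, mul_zero,
    Finset.sum_const_zero, add_zero]
  simp

lemma rank_full (S : Tensor 7 7 7) : tensorRankLE S 343 := by
  classical
  let ee : (Fin 7 × Fin 7 × Fin 7) ≃ Fin 343 :=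
    ((Equiv.prodCongr (Equiv.refl (Fin 7)) finProdFinEquiv).trans finProdFinEquiv).trans
      (finCongr (by norm_num))
  refine ⟨fun s => Pi.single (ee.symm s).1 (S (ee.symm s).1 (ee.symm s).2.1 (ee.symm s).2.2),
          fun s => Pi.single (ee.symm s).2.1 1,
          fun s => Pi.single (ee.symm s).2.2 1, ?_⟩
  intro i j k
  rw [← Equiv.sum_comp ee]
  simp only [Equiv.symm_apply_apply]
  rw [Fintype.sum_prod_type]
  simp only [Fintype.sum_prod_type]
  simp [Pi.single_apply, ite_mul, mul_ite, mul_zero, zero_mul, mul_one,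
    Finset.sum_ite_eq, Finset.mem_univ, if_true, eq_comm]

lemma borderRank_ge : 8 ≤ borderRank Tend7 := by
  rw [borderRank]
  apply le_csInf
  · exact ⟨343, subset_closure (rank_full Tend7)⟩
  · intro r hr
    by_contra hlt
    push_neg at hlt
    have h7 : Tend7 ∈ closure {S : Tensor 7 7 7 | tensorRankLE S 7} := by
      refine closure_mono ?_ hr
      intro S hS
      exact rankLE_mono (by omega) hS
    exact not_mem_closure7 h7

end Stmt9Aux

/-- The space of slices of `T_{end,7}` is commutative and closed under matrix
multiplication (indeed the product of any two of the nilpotent parts `N` is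
zero), yet it contains no nonzero rank-one matrix, and consequently
`R̲(T_{end,7}) ≥ 8`. -/
theorem stmt9 :
    (∀ α β : Fin 7 → ℂ, tslice Tend7 α * tslice Tend7 β
        = tslice Tend7 β * tslice Tend7 α) ∧
    (∀ α β : Fin 7 → ℂ, ∃ γ : Fin 7 → ℂ,
      tslice Tend7 α * tslice Tend7 β = tslice Tend7 γ) ∧
    (∀ α β : Fin 7 → ℂ, α 0 = 0 → β 0 = 0 →
      tslice Tend7 α * tslice Tend7 β = 0) ∧
    (∀ α : Fin 7 → ℂ, (tslice Tend7 α).rank ≠ 1) ∧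
    8 ≤ borderRank Tend7 := by
  refine ⟨?_, ?_, ?_, Stmt9Aux.rank_ne_one, ?_⟩
  · intro α β
    rw [Stmt9Aux.slice_mul, Stmt9Aux.slice_mul, mul_comm (β 0) (α 0)]
    abel
  · intro α β
    refine ⟨fun i => if i = 0 then α 0 * β 0 else α 0 * β i + β 0 * α i, ?_⟩
    rw [Stmt9Aux.slice_mul, Stmt9Aux.tslice_eq]
    congr 1
    ext j k
    simp [Stmt9Aux.Nmat]
    split_ifs <;> ring
  · intro α β hα hβ
    rw [Stmt9Aux.slice_mul, hα, hβ]
    simp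
  · exact Stmt9Aux.borderRank_ge

end
end

section
/- Let T ∈ A⊗B⊗C = ℂ^m⊗ℂ^m⊗ℂ^m be 1_A-generic and 1_B-generic and satisfy Strassen's A-equations, i.e. for some (equivalently any) α₀ ∈ A^* with T(α₀) invertible the space E_{α₀}(T) is commutative. Then T is isomorphic to a partially symmetric tensor: there exist invertible linear maps g_A ∈ GL(A), g_B ∈ GL(B), g_C ∈ GL(C) such that (g_A⊗g_B⊗g_C)(T), written with coordinates t^{ijk}, satisfies t^{ijk} = t^{jik} for all i,j,k (i.e. it lies in S²ℂ^m⊗ℂ^m). If moreover T is also 1_C-generic (hence 1-generic), then the maps can be chosen so that the resulting tensor is fully symmetric, lying in S³ℂ^m. -/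
open scoped BigOperators

noncomputable section

/-- The action of a triple of linear maps `(g_A, g_B, g_C)` on a tensor. -/
def actT {a b c : ℕ} (gA : Matrix (Fin a) (Fin a) ℂ) (gB : Matrix (Fin b) (Fin b) ℂ)
    (gC : Matrix (Fin c) (Fin c) ℂ) (T : Tensor a b c) : Tensor a b c :=
  fun i j k => ∑ i', ∑ j', ∑ k', gA i i' * gB j j' * gC k k' * T i' j' k'

open Matrix

/-! ### Auxiliary lemmas -/

lemma actT_entry {m : ℕ} (G gC : Matrix (Fin m) (Fin m) ℂ) (T : Tensor m m m) (p q k : Fin m) :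
    actT G 1 gC T p q k = ∑ k', gC k k' * tslice T (G p) q k' := by
  unfold actT tslice
  simp only [Matrix.of_apply]
  have h1 : ∀ i' : Fin m, (∑ j', ∑ k', G p i' * (1 : Matrix (Fin m) (Fin m) ℂ) q j' * gC k k' * T i' j' k')
      = ∑ k', G p i' * gC k k' * T i' q k' := by
    intro i'
    rw [Finset.sum_eq_single q]
    · simp [Matrix.one_apply]
    · intro b _ hb
      simp [Matrix.one_apply_ne' hb]
    · simp
  rw [Finset.sum_congr rfl fun i' _ => h1 i', Finset.sum_comm]
  refine Finset.sum_congr rfl fun k' _ => ?_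
  rw [Finset.mul_sum]
  exact Finset.sum_congr rfl fun i' _ => by ring

lemma sum_mul_sum_comm {m : ℕ} (a b : Fin m → ℂ) (f : Fin m → Fin m → ℂ) :
    ∑ x, a x * ∑ y, f x y * b y = ∑ y, (∑ x, a x * f x y) * b y := by
  simp only [Finset.mul_sum, Finset.sum_mul]
  rw [Finset.sum_comm]
  exact Finset.sum_congr rfl fun y _ => Finset.sum_congr rfl fun x _ => by ring

lemma sum_mul_sum_comm' {m : ℕ} (a c : Fin m → ℂ) (d : Fin m → Fin m → ℂ) :
    ∑ x, a x * ∑ y, c y * d y x = ∑ y, c y * ∑ x, d y x * a x := by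
  simp only [Finset.mul_sum]
  rw [Finset.sum_comm]
  exact Finset.sum_congr rfl fun y _ => Finset.sum_congr rfl fun x _ => by ring

lemma slice_swap {m : ℕ} (T : Tensor m m m) (α β : Fin m → ℂ) (k : Fin m) :
    ∑ q, β q * tslice T α q k = ∑ i, α i * tsliceB T β i k := by
  unfold tslice tsliceB
  simp only [Matrix.of_apply, Finset.mul_sum]
  rw [Finset.sum_comm]
  exact Finset.sum_congr rfl fun i _ => Finset.sum_congr rfl fun q _ => by ring

/-- (Proposition `surpriseprop`.) A `1_A`- and `1_B`-generic tensor satisfying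
Strassen's `A`-equations is isomorphic (under `GL(A) × GL(B) × GL(C)`) to a
tensor in `S²ℂ^m ⊗ ℂ^m`; if moreover it is `1_C`-generic, it is isomorphic to
a tensor in `S³ℂ^m`. -/
theorem stmt11 {m : ℕ} (T : Tensor m m m)
    (hA : OneAGeneric T)
    (hB : ∃ β : Fin m → ℂ, IsUnit (tsliceB T β))
    (hstr : ∀ α₀ : Fin m → ℂ, IsUnit (tslice T α₀) →
      ∀ X ∈ Espace T α₀, ∀ Y ∈ Espace T α₀, X * Y = Y * X) :
    (∃ gA gB gC : Matrix (Fin m) (Fin m) ℂ,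
      IsUnit gA ∧ IsUnit gB ∧ IsUnit gC ∧
      ∀ i j k, actT gA gB gC T i j k = actT gA gB gC T j i k) ∧
    ((∃ γ : Fin m → ℂ, IsUnit (tsliceC T γ)) →
      ∃ gA gB gC : Matrix (Fin m) (Fin m) ℂ,
        IsUnit gA ∧ IsUnit gB ∧ IsUnit gC ∧
        (∀ i j k, actT gA gB gC T i j k = actT gA gB gC T j i k) ∧
        (∀ i j k, actT gA gB gC T i j k = actT gA gB gC T i k j)) := by
  obtain ⟨α₀, hα₀⟩ := hA
  obtain ⟨β, hβ⟩ := hB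
  set M₀ := tslice T α₀ with hM₀def
  have hM₀inv : IsUnit M₀⁻¹ := Matrix.isUnit_nonsing_inv_iff.mpr hα₀
  set P := tsliceB T β * M₀⁻¹ with hPdef
  have hPu : IsUnit P := hβ.mul hM₀inv
  set G := P⁻¹ with hGdef
  have hGu : IsUnit G := Matrix.isUnit_nonsing_inv_iff.mpr hPu
  have hGP : G * P = 1 := Matrix.nonsing_inv_mul P ((Matrix.isUnit_iff_isUnit_det P).mp hPu)
  set Z : Fin m → Matrix (Fin m) (Fin m) ℂ := fun p => tslice T (G p) * M₀⁻¹ with hZdef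
  -- the β-row identity
  have hrow : ∀ p k, ∑ q, β q * Z p q k = (1 : Matrix (Fin m) (Fin m) ℂ) p k := by
    intro p k
    have e1 : ∀ q, Z p q k = ∑ k', tslice T (G p) q k' * M₀⁻¹ k' k := by
      intro q; rw [hZdef]; exact Matrix.mul_apply
    calc ∑ q, β q * Z p q k
        = ∑ q, β q * ∑ k', tslice T (G p) q k' * M₀⁻¹ k' k := by
          exact Finset.sum_congr rfl fun q _ => by rw [e1]
      _ = ∑ k', (∑ q, β q * tslice T (G p) q k') * M₀⁻¹ k' k := sum_mul_sum_comm _ _ _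
      _ = ∑ k', (∑ i, G p i * tsliceB T β i k') * M₀⁻¹ k' k := by
          exact Finset.sum_congr rfl fun k' _ => by rw [slice_swap]
      _ = ∑ k', (G * tsliceB T β) p k' * M₀⁻¹ k' k := by
          exact Finset.sum_congr rfl fun k' _ => by rw [Matrix.mul_apply]
      _ = (G * tsliceB T β * M₀⁻¹) p k := (Matrix.mul_apply).symm
      _ = (G * P) p k := by rw [hPdef, Matrix.mul_assoc]
      _ = (1 : Matrix (Fin m) (Fin m) ℂ) p k := by rw [hGP]
  -- the key contraction lemma
  have hkey : ∀ (Y : Matrix (Fin m) (Fin m) ℂ) (q k : Fin m),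
      ∑ s, β s * (Z q * Y) s k = Y q k := by
    intro Y q k
    calc ∑ s, β s * (Z q * Y) s k
        = ∑ s, β s * ∑ r, Z q s r * Y r k := by
          exact Finset.sum_congr rfl fun s _ => by rw [Matrix.mul_apply]
      _ = ∑ r, (∑ s, β s * Z q s r) * Y r k := sum_mul_sum_comm _ _ _
      _ = ∑ r, (1 : Matrix (Fin m) (Fin m) ℂ) q r * Y r k := by
          exact Finset.sum_congr rfl fun r _ => by rw [hrow]
      _ = Y q k := by
          rw [Finset.sum_eq_single q]
          · simp [Matrix.one_apply]
          · intro b _ hb; simp [Matrix.one_apply_ne' hb]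
          · simp
  -- commutativity of the Z's
  have hcomm : ∀ p q, Z p * Z q = Z q * Z p := by
    intro p q
    exact hstr α₀ hα₀ (Z p) ⟨G p, rfl⟩ (Z q) ⟨G q, rfl⟩
  -- symmetry in the first two indices
  have sym1 : ∀ p q k, Z p q k = Z q p k := by
    intro p q k
    have h1 := hkey (Z p) q k
    have h2 := hkey (Z q) p k
    rw [hcomm p q] at h2
    rw [← h1, ← h2]
  -- entries of the normalized tensor
  have hS : ∀ p q k, actT G 1 (M₀⁻¹)ᵀ T p q k = Z p q k := by
    intro p q k
    rw [actT_entry]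
    have e : Z p q k = ∑ k', tslice T (G p) q k' * M₀⁻¹ k' k := Matrix.mul_apply
    rw [e]
    exact Finset.sum_congr rfl fun k' _ => by
      rw [Matrix.transpose_apply]; ring
  have hM₀Tu : IsUnit (M₀⁻¹)ᵀ := by
    rw [Matrix.isUnit_iff_isUnit_det, Matrix.det_transpose, ← Matrix.isUnit_iff_isUnit_det]
    exact hM₀inv
  constructor
  · exact ⟨G, 1, (M₀⁻¹)ᵀ, hGu, isUnit_one, hM₀Tu, fun i j k => by
      rw [hS, hS]; exact sym1 i j k⟩
  · rintro ⟨γ, hγ⟩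
    set Bm := G * tsliceC T γ with hBmdef
    have hBu : IsUnit Bm := hGu.mul hγ
    have hM₀invM₀ : M₀⁻¹ * M₀ = 1 :=
      Matrix.nonsing_inv_mul M₀ ((Matrix.isUnit_iff_isUnit_det M₀).mp hα₀)
    set γ' : Fin m → ℂ := M₀.mulVec γ with hγ'def
    have hmv : ∀ k', ∑ r, M₀⁻¹ k' r * γ' r = γ k' := by
      intro k'
      have : M₀⁻¹.mulVec γ' = γ := by
        rw [hγ'def, Matrix.mulVec_mulVec, hM₀invM₀, Matrix.one_mulVec]
      calc ∑ r, M₀⁻¹ k' r * γ' r = M₀⁻¹.mulVec γ' k' := by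
            rw [Matrix.mulVec, dotProduct]
        _ = γ k' := by rw [this]
    -- entries of Bm via Z
    have hBent : ∀ j k, Bm j k = ∑ r, γ' r * Z j k r := by
      intro j k
      have lhs : Bm j k = ∑ k', γ k' * tslice T (G j) k k' := by
        rw [hBmdef, Matrix.mul_apply]
        unfold tsliceC tslice
        simp only [Matrix.of_apply, Finset.mul_sum]
        rw [Finset.sum_comm]
        exact Finset.sum_congr rfl fun k' _ => Finset.sum_congr rfl fun i _ => by ring
      have rhs : ∑ r, γ' r * Z j k r = ∑ k', γ k' * tslice T (G j) k k' := by
        have e1 : ∀ r, Z j k r = ∑ k', tslice T (G j) k k' * M₀⁻¹ k' r := by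
          intro r; rw [hZdef]; exact Matrix.mul_apply
        calc ∑ r, γ' r * Z j k r
            = ∑ r, γ' r * ∑ k', tslice T (G j) k k' * M₀⁻¹ k' r := by
              exact Finset.sum_congr rfl fun r _ => by rw [e1]
          _ = ∑ k', tslice T (G j) k k' * ∑ r, M₀⁻¹ k' r * γ' r :=
              sum_mul_sum_comm' _ _ _
          _ = ∑ k', γ k' * tslice T (G j) k k' := by
              exact Finset.sum_congr rfl fun k' _ => by rw [hmv]; ring
      rw [lhs, ← rhs]
    -- entries of the final tensor
    have hS2 : ∀ p q j, actT G 1 (Bm * (M₀⁻¹)ᵀ) T p q j = ∑ k, Bm j k * Z p q k := by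
      intro p q j
      rw [actT_entry]
      have e1 : ∀ k', (Bm * (M₀⁻¹)ᵀ) j k' = ∑ k, Bm j k * M₀⁻¹ k' k := by
        intro k'
        rw [Matrix.mul_apply]
        exact Finset.sum_congr rfl fun k _ => by rw [Matrix.transpose_apply]
      have e2 : ∀ k, Z p q k = ∑ k', tslice T (G p) q k' * M₀⁻¹ k' k := by
        intro k; rw [hZdef]; exact Matrix.mul_apply
      calc ∑ k', (Bm * (M₀⁻¹)ᵀ) j k' * tslice T (G p) q k'
          = ∑ k', (∑ k, Bm j k * M₀⁻¹ k' k) * tslice T (G p) q k' := by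
            exact Finset.sum_congr rfl fun k' _ => by rw [e1]
        _ = ∑ k, Bm j k * ∑ k', tslice T (G p) q k' * M₀⁻¹ k' k := by
            simp only [Finset.sum_mul, Finset.mul_sum]
            rw [Finset.sum_comm]
            exact Finset.sum_congr rfl fun k _ => Finset.sum_congr rfl fun k' _ => by ring
        _ = ∑ k, Bm j k * Z p q k := by
            exact Finset.sum_congr rfl fun k _ => by rw [e2]
    -- the middle expression
    have hmid : ∀ p q j, ∑ k, Bm j k * Z p q k = ∑ r, γ' r * (Z p * Z j) q r := by
      intro p q j
      calc ∑ k, Bm j k * Z p q k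
          = ∑ k, (∑ r, γ' r * Z j k r) * Z p q k := by
            exact Finset.sum_congr rfl fun k _ => by rw [hBent]
        _ = ∑ r, γ' r * ∑ k, Z p q k * Z j k r := by
            simp only [Finset.sum_mul, Finset.mul_sum]
            rw [Finset.sum_comm]
            exact Finset.sum_congr rfl fun r _ => Finset.sum_congr rfl fun k _ => by ring
        _ = ∑ r, γ' r * (Z p * Z j) q r := by
            exact Finset.sum_congr rfl fun r _ => by rw [Matrix.mul_apply]
    -- symmetry in the last two indices
    have sym23 : ∀ p q j, ∑ k, Bm j k * Z p q k = ∑ k, Bm q k * Z p j k := by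
      intro p q j
      rw [hmid p q j, hmid p j q]
      refine Finset.sum_congr rfl fun r _ => ?_
      congr 1
      have hM : Z q * (Z p * Z j) = Z j * (Z p * Z q) := by
        rw [hcomm p j, ← Matrix.mul_assoc, hcomm q j, Matrix.mul_assoc, hcomm q p]
      rw [← hkey (Z p * Z j) q r, ← hkey (Z p * Z q) j r, hM]
    refine ⟨G, 1, Bm * (M₀⁻¹)ᵀ, hGu, isUnit_one, hBu.mul hM₀Tu, ?_, ?_⟩
    · intro i j k
      rw [hS2, hS2]
      exact Finset.sum_congr rfl fun s _ => by rw [sym1 i j s]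
    · intro i j k
      rw [hS2, hS2]
      exact sym23 i j k

end
end
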